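/- arXiv:1211.3232 — 8 statements merged into one kernel-verified Lean document; each statement's English description precedes it below -/
import Mathlib

section
/- If v is a solution of the radial ODE ((n-1)/m)((v^m)'' + ((n-1)/r)(v^m)') + αv + βrv' = 0 on (0,∞) with v > 0, v(0) = η, v'(0) = 0, then for all r > 0: -((n-1)/m)(v^m)'(r) = βrv(r) + ((α - nβ)/r^(n-1)) ∫₀^r z^(n-1) v(z) dz. -/
open MeasureTheory

theorem stmt_2 (n : ℕ) (hn : 3 ≤ n) (m α β η : ℝ) (hm : 0 < m) (hη : 0 < η)
    (v : ℝ → ℝ) (hv : ContDiff ℝ 2 v) (hpos : ∀ r, 0 ≤ r → 0 < v r)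
    (hode : ∀ r, 0 < r →
      ((n : ℝ) - 1) / m * (deriv (deriv (fun s => v s ^ m)) r
        + (((n : ℝ) - 1) / r) * deriv (fun s => v s ^ m) r)
      + α * v r + β * r * deriv v r = 0)
    (hv0 : v 0 = η) (hv'0 : deriv v 0 = 0) :
    ∀ r, 0 < r →
      -(((n : ℝ) - 1) / m) * deriv (fun s => v s ^ m) r =
        β * r * v r + ((α - n * β) / r ^ (n - 1)) * ∫ z in (0 : ℝ)..r, z ^ (n - 1) * v z := by
  intro r hr
  set w : ℝ → ℝ := fun s => v s ^ m with hwdef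
  set c : ℝ := ((n : ℝ) - 1) / m with hcdef
  set U : Set ℝ := {x : ℝ | 0 < v x} with hUdef
  have hvcont : Continuous v := hv.continuous
  have hU : IsOpen U := isOpen_lt continuous_const hvcont
  have hwOn : ContDiffOn ℝ 2 w U := fun x hx =>
    ((hv.contDiffAt).rpow_const_of_ne (ne_of_gt hx)).contDiffWithinAt
  have hd1 : ContDiffOn ℝ 1 (deriv w) U := hwOn.deriv_of_isOpen hU (by norm_num)
  -- the integrand of the primitive
  have hfcont : Continuous (fun z : ℝ => z ^ (n - 1) * v z) := by continuity
  set G : ℝ → ℝ := fun x => ∫ z in (0:ℝ)..x, z ^ (n - 1) * v z with hGdef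
  have hGderiv : ∀ x : ℝ, HasDerivAt G (x ^ (n - 1) * v x) x := by
    intro x
    exact intervalIntegral.integral_hasDerivAt_right
      (hfcont.intervalIntegrable _ _)
      (hfcont.stronglyMeasurableAtFilter _ _)
      hfcont.continuousAt
  set F : ℝ → ℝ := fun x => x ^ (n - 1) * (c * deriv w x) + β * (x ^ n * v x)
      + (α - n * β) * G x with hFdef
  have hsub : Set.Icc (0:ℝ) r ⊆ U := fun x hx => hpos x hx.1
  have hFcont : ContinuousOn F (Set.Icc 0 r) := by
    apply ContinuousOn.add
    apply ContinuousOn.add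
    · exact (continuousOn_pow _).mul
        (continuousOn_const.mul (hd1.continuousOn.mono hsub))
    · exact (continuousOn_const.mul ((continuousOn_pow _).mul hvcont.continuousOn))
    · exact continuousOn_const.mul (fun x _ => ((hGderiv x).differentiableAt.continuousAt).continuousWithinAt)
  have hFderiv : ∀ x ∈ Set.Ioo (0:ℝ) r, HasDerivAt F 0 x := by
    intro x hx
    have hx0 : 0 < x := hx.1
    have hxU : x ∈ U := hpos x hx0.le
    have hdwd : HasDerivAt (deriv w) (deriv (deriv w) x) x := by
      have := (hd1.differentiableOn one_ne_zero).differentiableAt (hU.mem_nhds hxU)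
      exact this.hasDerivAt
    have hdv : HasDerivAt v (deriv v x) x :=
      ((hv.differentiable (by norm_num)) x).hasDerivAt
    have h1 : HasDerivAt (fun y => y ^ (n - 1) * (c * deriv w y))
        (((n - 1 : ℕ) : ℝ) * x ^ (n - 1 - 1) * (c * deriv w x)
          + x ^ (n - 1) * (c * deriv (deriv w) x)) x :=
      (hasDerivAt_pow (n - 1) x).mul (hdwd.const_mul c)
    have h2 : HasDerivAt (fun y => β * (y ^ n * v y))
        (β * (((n : ℕ) : ℝ) * x ^ (n - 1) * v x + x ^ n * deriv v x)) x :=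
      ((hasDerivAt_pow n x).mul hdv).const_mul β
    have h3 : HasDerivAt (fun y => (α - n * β) * G y)
        ((α - n * β) * (x ^ (n - 1) * v x)) x := (hGderiv x).const_mul _
    have H := (h1.add h2).add h3
    convert H using 1
    case e'_4 => rfl
    case e'_5 => rfl
    case e'_8 => rfl
    have hode' := hode x hx0
    have e1 : x ^ (n - 1) = x ^ (n - 1 - 1) * x := by
      rw [← pow_succ]; congr 1; omega
    have e2 : x ^ n = x ^ (n - 1) * x := by
      rw [← pow_succ]; congr 1; omega
    have e3 : ((n - 1 : ℕ) : ℝ) = (n : ℝ) - 1 := by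
      push_cast [Nat.cast_sub (by omega : 1 ≤ n)]; ring
    have hode2 : x * (c * deriv (deriv w) x + α * v x + β * x * deriv v x)
        + c * (((n:ℝ) - 1) * deriv w x) = 0 := by
      have h := congrArg (fun t => x * t) hode'
      simp only [mul_zero] at h
      rw [← h]; field_simp; ring
    rw [e3, e2, e1]
    linear_combination -(x ^ (n - 1 - 1)) * hode2
  have hF0 : F 0 = 0 := by
    have h1 : (0:ℝ) ^ (n - 1) = 0 := zero_pow (by omega)
    have h2 : (0:ℝ) ^ n = 0 := zero_pow (by omega)
    simp [hFdef, hGdef, h1, h2]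
  have hFr : F r = 0 := by
    have := intervalIntegral.integral_eq_sub_of_hasDerivAt_of_le hr.le hFcont
      hFderiv (intervalIntegrable_const (c := (0:ℝ)))
    simpa [hF0] using this.symm
  -- conclude
  have hrpow : (r : ℝ) ^ (n - 1) ≠ 0 := pow_ne_zero _ hr.ne'
  have e2 : r ^ n = r ^ (n - 1) * r := by rw [← pow_succ]; congr 1; omega
  have hFr' : r ^ (n - 1) * (c * deriv w r) + β * (r ^ (n-1) * r * v r)
      + (α - n * β) * G r = 0 := by rw [← e2]; exact hFr
  show -c * deriv w r = β * r * v r + ((α - n * β) / r ^ (n - 1)) * G r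
  field_simp
  linear_combination -hFr'
end

section
/- Let v be a solution of the radial ODE ((n-1)/m)((v^m)'' + ((n-1)/r)(v^m)') + αv + βrv' = 0 on (0,∞), v > 0, with v(0) = η > 0 and v'(0) = 0, where β > 0 and α ≤ nβ. Then v(r) ≥ (η^(m-1) + ((1-m)β/(2(n-1))) r²)^(-1/(1-m)) for all r ≥ 0. In particular there exists C₂ > 0 such that r² v(r)^(1-m) ≥ C₂ for all r ≥ 1. -/
open Filter Topology MeasureTheory

set_option maxHeartbeats 1000000 in
theorem stmt_3 (n : ℕ) (hn : 3 ≤ n) (m ρ α β η : ℝ)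
    (hm : 0 < m) (hm2 : m < ((n : ℝ) - 2) / n) (hρ : 0 < ρ)
    (hα : α = (2 * β + ρ) / (1 - m)) (hη : 0 < η)
    (v : ℝ → ℝ) (hv : ContDiff ℝ 2 v) (hpos : ∀ r, 0 ≤ r → 0 < v r)
    (hode : ∀ r, 0 < r →
      ((n : ℝ) - 1) / m * (deriv (deriv (fun s => v s ^ m)) r
        + (((n : ℝ) - 1) / r) * deriv (fun s => v s ^ m) r)
      + α * v r + β * r * deriv v r = 0)
    (hv0 : v 0 = η) (hv0d : deriv v 0 = 0)
    (hβ : 0 < β) (hαβ : α ≤ n * β) :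
    (∀ r, 0 ≤ r →
      v r ≥ (η ^ (m - 1) + ((1 - m) * β / (2 * ((n : ℝ) - 1))) * r ^ 2) ^ (-(1 / (1 - m)))) ∧
    ∃ C₂ > 0, ∀ r, 1 ≤ r → r ^ 2 * v r ^ (1 - m) ≥ C₂ := by
  obtain ⟨k, rfl⟩ : ∃ k, n = k + 3 := ⟨n - 3, by omega⟩
  clear hn
  have hN : ((k + 3 : ℕ) : ℝ) = (k : ℝ) + 3 := by push_cast; ring
  rw [hN] at hm2 hode hαβ ⊢
  set N : ℝ := (k : ℝ) + 3 with hNdef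
  have hk0 : (0 : ℝ) ≤ (k : ℝ) := Nat.cast_nonneg k
  have hN1 : (0 : ℝ) < N - 1 := by simp only [hNdef]; linarith
  have hm1 : m < 1 := lt_of_lt_of_le hm2 (by
    rw [div_le_one (by positivity : (0:ℝ) < N)]; linarith)
  have h1m : (0 : ℝ) < 1 - m := by linarith
  set c : ℝ := (1 - m) * β / (2 * (N - 1)) with hc
  have hcpos : 0 < c := by positivity
  have hvd : Differentiable ℝ v := hv.differentiable (by norm_num)
  have hdv1 : ContDiff ℝ 1 (deriv v) :=
    (contDiff_succ_iff_deriv.mp (by norm_num at hv ⊢; exact hv)).2.2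
  have hdvC : Continuous (deriv v) := hdv1.continuous
  have hdvD : Differentiable ℝ (deriv v) := hdv1.differentiable (by norm_num)
  -- the open set where v is positive
  set U : Set ℝ := {x | 0 < v x} with hUdef
  have hU : IsOpen U := isOpen_lt continuous_const hv.continuous
  have hIU : ∀ r : ℝ, 0 ≤ r → r ∈ U := fun r hr => hpos r hr
  set W : ℝ → ℝ := fun s => m * v s ^ (m - 1) * deriv v s with hWdef
  have hW : ∀ x ∈ U, HasDerivAt (fun s => v s ^ m) (W x) x := by
    intro x hx
    have h := ((hvd x).hasDerivAt).rpow_const (p := m) (Or.inl (ne_of_gt hx))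
    convert h using 1
    simp only [hWdef]; ring
  have hWd : ∀ x ∈ U, DifferentiableAt ℝ W x := by
    intro x hx
    exact ((differentiableAt_const m).mul
      ((hvd x).rpow_const (Or.inl (ne_of_gt hx)))).mul (hdvD x)
  have hderivw : ∀ x ∈ U, deriv (fun s => v s ^ m) x = W x := fun x hx => (hW x hx).deriv
  have hEq : ∀ x ∈ U, (deriv (fun s => v s ^ m)) =ᶠ[𝓝 x] W := by
    intro x hx
    filter_upwards [hU.mem_nhds hx] with y hy using hderivw y hy
  have hderiv2 : ∀ x ∈ U, deriv (deriv (fun s => v s ^ m)) x = deriv W x :=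
    fun x hx => (hEq x hx).deriv_eq
  -- the auxiliary function G
  set G : ℝ → ℝ := fun r => r ^ (k + 2) * ((N - 1) / m * W r + β * r * v r) with hGdef
  have hGder : ∀ x ∈ Set.Ioi (0 : ℝ), HasDerivAt G (x ^ (k + 2) * v x * (N * β - α)) x := by
    intro x hx
    have hx0 : (0 : ℝ) < x := hx
    have hxU : x ∈ U := hpos x hx0.le
    have hWx : HasDerivAt W (deriv W x) x := (hWd x hxU).hasDerivAt
    have h1 : HasDerivAt (fun r => (N - 1) / m * W r + β * r * v r)
        ((N - 1) / m * deriv W x + ((β * 1) * v x + (β * x) * deriv v x)) x :=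
      (hWx.const_mul _).add (((hasDerivAt_id x).const_mul β).mul ((hvd x).hasDerivAt))
    have h2 : HasDerivAt (fun r : ℝ => r ^ (k + 2)) (((k : ℝ) + 2) * x ^ (k + 1)) x := by
      have := hasDerivAt_pow (k + 2) x
      convert this using 2
      · rfl
      all_goals push_cast <;> ring
    have hG2 := h2.mul h1
    have hodeW : (N - 1) / m * (deriv W x + ((N - 1) / x) * W x)
        + α * v x + β * x * deriv v x = 0 := by
      have h := hode x hx0
      rwa [hderiv2 x hxU, hderivw x hxU] at h
    convert hG2 using 1
    · rfl
    · rfl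
    · rfl
    have hxne : x ≠ 0 := ne_of_gt hx0
    have hmne : m ≠ 0 := ne_of_gt hm
    have hD : deriv W x = -(((N - 1) / x) * W x)
        - m / (N - 1) * (α * v x + β * x * deriv v x) := by
      have hNne : N - 1 ≠ 0 := ne_of_gt hN1
      field_simp at hodeW ⊢
      linarith
    rw [hD]
    simp only [hNdef]
    have hxk : x ^ (k + 2) = x * x ^ (k + 1) := by ring
    have hk2 : (k : ℝ) + 2 ≠ 0 := by positivity
    have hk2' : (k : ℝ) + 3 - 1 ≠ 0 := by linarith
    field_simp
    ring
  have hGcont : ContinuousOn G (Set.Ici 0) := by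
    intro x hx
    have hxU : x ∈ U := hIU x hx
    have hWc : ContinuousAt W x :=
      (continuousAt_const.mul
        ((hv.continuous.continuousAt).rpow_const (Or.inl (ne_of_gt hxU)))).mul hdvC.continuousAt
    exact ((continuousAt_pow _ _).mul
      ((hWc.const_mul _).add ((continuousAt_const.mul continuousAt_id).mul
        hv.continuous.continuousAt))).continuousWithinAt
  have hGmono : MonotoneOn G (Set.Ici 0) := by
    apply monotoneOn_of_deriv_nonneg (convex_Ici 0) hGcont
    · intro x hx
      rw [interior_Ici] at hx
      exact (hGder x hx).differentiableAt.differentiableWithinAt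
    · intro x hx
      rw [interior_Ici] at hx
      rw [(hGder x hx).deriv]
      have hx0 : (0:ℝ) < x := hx
      have hvx := hpos x hx0.le
      have hp : (0:ℝ) < x ^ (k + 2) := pow_pos hx0 _
      nlinarith [mul_pos hp hvx]
  have hG0 : G 0 = 0 := by simp [hGdef]
  have hKey : ∀ x : ℝ, 0 < x → 0 ≤ (N - 1) * v x ^ (m - 1) * deriv v x + β * x * v x := by
    intro x hx
    have hGx : 0 ≤ G x := by
      have := hGmono (Set.self_mem_Ici) (Set.mem_Ici.mpr hx.le) hx.le
      rwa [hG0] at this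
    have hp : (0:ℝ) < x ^ (k + 2) := pow_pos hx _
    have hA : 0 ≤ (N - 1) / m * W x + β * x * v x := by
      simp only [hGdef] at hGx
      nlinarith [hGx, hp]
    have hWe : (N - 1) / m * W x = (N - 1) * v x ^ (m - 1) * deriv v x := by
      simp only [hWdef]
      field_simp
    linarith [hWe ▸ hA]
  -- the function φ
  set φ : ℝ → ℝ := fun r => η ^ (m - 1) + c * r ^ 2 - v r ^ (m - 1) with hφdef
  have hφder : ∀ x ∈ Set.Ioi (0:ℝ), HasDerivAt φ
      (c * (2 * x) - deriv v x * (m - 1) * v x ^ (m - 1 - 1)) x := by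
    intro x hx
    have hxU : (0:ℝ) < v x := hpos x (le_of_lt hx)
    have h3 : HasDerivAt (fun r => v r ^ (m - 1))
        (deriv v x * (m - 1) * v x ^ (m - 1 - 1)) x :=
      ((hvd x).hasDerivAt).rpow_const (Or.inl (ne_of_gt hxU))
    have h4 : HasDerivAt (fun r : ℝ => η ^ (m - 1) + c * r ^ 2) (c * (2 * x)) x := by
      have := (hasDerivAt_pow 2 x).const_mul c
      have h5 := (hasDerivAt_const x (η ^ (m - 1))).add this
      convert h5 using 1
      · rfl
      · rfl
      · rfl
      push_cast; ring
    exact h4.sub h3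
  have hφcont : ContinuousOn φ (Set.Ici 0) := by
    intro x hx
    have hxU : (0:ℝ) < v x := hpos x hx
    exact ((continuousAt_const.add (continuousAt_const.mul (continuousAt_pow x 2))).sub
      ((hv.continuous.continuousAt).rpow_const (Or.inl (ne_of_gt hxU)))).continuousWithinAt
  have hφmono : MonotoneOn φ (Set.Ici 0) := by
    apply monotoneOn_of_deriv_nonneg (convex_Ici 0) hφcont
    · intro x hx
      rw [interior_Ici] at hx
      exact (hφder x hx).differentiableAt.differentiableWithinAt
    · intro x hx
      rw [interior_Ici] at hx
      rw [(hφder x hx).deriv]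
      have hx0 : (0:ℝ) < x := hx
      have hvx : (0:ℝ) < v x := hpos x hx0.le
      have hkey := hKey x hx0
      have e1 : v x ^ (m - 1) = v x ^ (m - 1 - 1) * v x := by
        rw [← Real.rpow_add_one (ne_of_gt hvx)]
        norm_num
      rw [e1] at hkey
      have hiden : (c * (2 * x) - deriv v x * (m - 1) * v x ^ (m - 1 - 1)) * ((N - 1) * v x)
          = ((N - 1) * (v x ^ (m - 1 - 1) * v x) * deriv v x + β * x * v x) * (1 - m) := by
        simp only [hc]
        field_simp
        ring
      nlinarith [mul_pos hN1 hvx, mul_nonneg hkey h1m.le]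
  have hφ0 : φ 0 = 0 := by simp [hφdef, hv0]
  have hXb : ∀ r : ℝ, 0 ≤ r → v r ^ (m - 1) ≤ η ^ (m - 1) + c * r ^ 2 := by
    intro r hr
    have := hφmono (Set.self_mem_Ici) (Set.mem_Ici.mpr hr) hr
    rw [hφ0] at this
    simp only [hφdef] at this
    linarith
  have hinv : ∀ r : ℝ, 0 ≤ r → (η ^ (m - 1) + c * r ^ 2)⁻¹ ≤ v r ^ (1 - m) := by
    intro r hr
    have hvp : 0 < v r := hpos r hr
    have hX : 0 < η ^ (m - 1) + c * r ^ 2 :=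
      add_pos_of_pos_of_nonneg (Real.rpow_pos_of_pos hη (m - 1))
        (mul_nonneg hcpos.le (sq_nonneg r))
    have e2 : v r ^ (m - 1) = (v r ^ (1 - m))⁻¹ := by
      rw [show m - 1 = -(1 - m) by ring, Real.rpow_neg hvp.le]
    have hb := hXb r hr
    rw [e2] at hb
    exact (inv_le_comm₀ (Real.rpow_pos_of_pos hvp _) hX).mp hb
  constructor
  · intro r hr
    have hvp : 0 < v r := hpos r hr
    have hX : 0 < η ^ (m - 1) + c * r ^ 2 :=
      add_pos_of_pos_of_nonneg (Real.rpow_pos_of_pos hη (m - 1))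
        (mul_nonneg hcpos.le (sq_nonneg r))
    rw [ge_iff_le]
    calc (η ^ (m - 1) + c * r ^ 2) ^ (-(1 / (1 - m)))
        = ((η ^ (m - 1) + c * r ^ 2)⁻¹) ^ (1 / (1 - m)) := by
          rw [Real.inv_rpow hX.le, ← Real.rpow_neg hX.le]
      _ ≤ (v r ^ (1 - m)) ^ (1 / (1 - m)) :=
          Real.rpow_le_rpow (inv_nonneg.mpr hX.le) (hinv r hr) (by positivity)
      _ = v r := by
          rw [← Real.rpow_mul hvp.le, mul_one_div, div_self (ne_of_gt h1m), Real.rpow_one]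
  · refine ⟨(η ^ (m - 1) + c)⁻¹, by positivity, fun r hr => ?_⟩
    have hr0 : (0:ℝ) ≤ r := le_trans zero_le_one hr
    have hX : 0 < η ^ (m - 1) + c * r ^ 2 :=
      add_pos_of_pos_of_nonneg (Real.rpow_pos_of_pos hη (m - 1))
        (mul_nonneg hcpos.le (sq_nonneg r))
    have h1 : r ^ 2 * (η ^ (m - 1) + c * r ^ 2)⁻¹ ≤ r ^ 2 * v r ^ (1 - m) :=
      mul_le_mul_of_nonneg_left (hinv r hr0) (sq_nonneg r)
    have hη1 : 0 < η ^ (m - 1) := Real.rpow_pos_of_pos hη _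
    have h2 : (η ^ (m - 1) + c)⁻¹ ≤ r ^ 2 * (η ^ (m - 1) + c * r ^ 2)⁻¹ := by
      rw [inv_le_iff_one_le_mul₀ (by positivity)]
      have key : (1:ℝ) ≤ r ^ 2 * (η ^ (m - 1) + c * r ^ 2)⁻¹ * (η ^ (m - 1) + c) := by
        rw [show r ^ 2 * (η ^ (m - 1) + c * r ^ 2)⁻¹ * (η ^ (m - 1) + c)
            = (r ^ 2 * (η ^ (m - 1) + c)) / (η ^ (m - 1) + c * r ^ 2) by field_simp,
          le_div_iff₀ hX]
        nlinarith [sq_nonneg (r - 1)]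
      linarith [key]
    exact le_trans h2 h1
end

section
/- Let v be a solution of the radial ODE ((n-1)/m)((v^m)'' + ((n-1)/r)(v^m)') + αv + βrv' = 0 on (0,∞), v > 0, with v(0) = η > 0 and v'(0) = 0, where α ≥ nβ > 0. Then v(r) ≤ (η^(m-1) + (α(1-m)/(2n(n-1))) r²)^(-1/(1-m)) for all r > 0; in particular r² v(r)^(1-m) ≤ 2n(n-1)/(α(1-m)) for all r ≥ 1. -/
open Filter Topology MeasureTheory

set_option maxHeartbeats 2000000 in
theorem stmt_4 (n : ℕ) (hn : 3 ≤ n) (m ρ α β η : ℝ)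
    (hm : 0 < m) (hm2 : m < ((n : ℝ) - 2) / n) (hρ : 0 < ρ)
    (hα : α = (2 * β + ρ) / (1 - m)) (hη : 0 < η)
    (v : ℝ → ℝ) (hv : ContDiff ℝ 2 v) (hpos : ∀ r, 0 ≤ r → 0 < v r)
    (hode : ∀ r, 0 < r →
      ((n : ℝ) - 1) / m * (deriv (deriv (fun s => v s ^ m)) r
        + (((n : ℝ) - 1) / r) * deriv (fun s => v s ^ m) r)
      + α * v r + β * r * deriv v r = 0)
    (hv0 : v 0 = η) (hv0d : deriv v 0 = 0)
    (hβ : 0 < n * β) (hαβ : α ≥ n * β) :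
    (∀ r, 0 < r →
      v r ≤ (η ^ (m - 1) + (α * (1 - m) / (2 * n * ((n : ℝ) - 1))) * r ^ 2) ^ (-(1 / (1 - m)))) ∧
    ∀ r, 1 ≤ r → r ^ 2 * v r ^ (1 - m) ≤ 2 * n * ((n : ℝ) - 1) / (α * (1 - m)) := by
  -- basic numeric facts
  have hN3 : (3:ℝ) ≤ (n:ℝ) := by exact_mod_cast hn
  have hN0 : (0:ℝ) < (n:ℝ) := by linarith
  have hN1 : (0:ℝ) < (n:ℝ) - 1 := by linarith
  have h1m : 0 < 1 - m := by
    have : ((n:ℝ) - 2) / n < 1 := by rw [div_lt_one hN0]; linarith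
    linarith
  have hα0 : 0 < α := lt_of_lt_of_le hβ hαβ
  have hβ0 : 0 < β := by nlinarith
  have hαnβ : 0 ≤ α - (n:ℝ) * β := by linarith
  have hnn : ((n-1 : ℕ) : ℝ) = (n:ℝ) - 1 := by
    have h1 : 1 ≤ n := by omega
    push_cast [Nat.cast_sub h1]; ring
  have hn10 : n - 1 ≠ 0 := by omega
  have hnn1 : n = (n - 1) + 1 := by omega
  -- differentiability of v
  have hvd : Differentiable ℝ v := hv.differentiable (by norm_num)
  have hvc : Continuous v := hvd.continuous
  have hv2 : ContDiff ℝ ((1:ℕ) + 1) v := by exact_mod_cast hv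
  have hdv1 : ContDiff ℝ (1:ℕ) (deriv v) := (contDiff_succ_iff_deriv.mp hv2).2.2
  have hdvd : Differentiable ℝ (deriv v) := hdv1.differentiable (by norm_num)
  -- w = v ^ m
  set w : ℝ → ℝ := fun s => v s ^ m with hw_def
  have hw : ∀ x : ℝ, 0 < v x → HasDerivAt w (deriv v x * m * v x ^ (m-1)) x := by
    intro x hx
    exact ((hvd x).hasDerivAt).rpow_const (Or.inl hx.ne')
  have hdw : ∀ x : ℝ, 0 < v x → deriv w x = deriv v x * m * v x ^ (m-1) :=
    fun x hx => (hw x hx).deriv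
  have hev : ∀ x : ℝ, 0 ≤ x → ∀ᶠ y in 𝓝 x, 0 < v y := by
    intro x hx
    exact (hvc.continuousAt).eventually (eventually_gt_nhds (hpos x hx))
  set g : ℝ → ℝ := fun y => deriv v y * m * v y ^ (m-1) with hg_def
  have hwg : ∀ x : ℝ, 0 ≤ x → deriv w =ᶠ[𝓝 x] g := by
    intro x hx
    exact (hev x hx).mono (fun y hy => hdw y hy)
  have hgd : ∀ x : ℝ, 0 < v x → HasDerivAt g
      (deriv (deriv v) x * m * v x ^ (m-1)
        + deriv v x * m * (deriv v x * (m-1) * v x ^ (m-1-1))) x := by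
    intro x hx
    have h1 : HasDerivAt (fun y => deriv v y * m) (deriv (deriv v) x * m) x :=
      ((hdvd x).hasDerivAt).mul_const m
    have h2 : HasDerivAt (fun y => v y ^ (m-1)) (deriv v x * (m-1) * v x ^ (m-1-1)) x :=
      ((hvd x).hasDerivAt).rpow_const (Or.inl hx.ne')
    exact h1.mul h2
  have hww : ∀ x : ℝ, 0 ≤ x → HasDerivAt (deriv w) (deriv (deriv w) x) x := by
    intro x hx
    have h := (hgd x (hpos x hx)).congr_of_eventuallyEq (hwg x hx)
    exact h.differentiableAt.hasDerivAt
  -- the functions F and Hf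
  set c0 : ℝ := m / ((n:ℝ) - 1) with hc0_def
  have hc0 : 0 < c0 := by rw [hc0_def]; exact div_pos hm hN1
  set F : ℝ → ℝ := fun r => r ^ (n-1) * deriv w r with hF_def
  set I : ℝ → ℝ := fun r => ∫ s in (0:ℝ)..r, s ^ (n-1) * v s with hI_def
  set Hf : ℝ → ℝ := fun r => -c0 * (β * (r ^ n * v r) + (α - n * β) * I r) with hHf_def
  have hicont : Continuous (fun s : ℝ => s ^ (n-1) * v s) := (continuous_pow _).mul hvc
  have hF' : ∀ x : ℝ, 0 ≤ x → HasDerivAt F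
      ((n-1 : ℕ) * x ^ (n-1-1) * deriv w x + x ^ (n-1) * deriv (deriv w) x) x := by
    intro x hx
    exact (hasDerivAt_pow (n-1) x).mul (hww x hx)
  have hI' : ∀ x : ℝ, HasDerivAt I (x ^ (n-1) * v x) x := by
    intro x
    exact intervalIntegral.integral_hasDerivAt_right (hicont.intervalIntegrable _ _)
      (hicont.stronglyMeasurableAtFilter _ _) hicont.continuousAt
  have hHf' : ∀ x : ℝ, HasDerivAt Hf
      (-c0 * (β * ((n:ℕ) * x ^ (n-1) * v x + x ^ n * deriv v x)
        + (α - n * β) * (x ^ (n-1) * v x))) x := by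
    intro x
    have h1 : HasDerivAt (fun r : ℝ => r ^ n * v r)
        ((n:ℕ) * x ^ (n-1) * v x + x ^ n * deriv v x) x :=
      (hasDerivAt_pow n x).mul ((hvd x).hasDerivAt)
    exact ((h1.const_mul β).add ((hI' x).const_mul (α - n*β))).const_mul (-c0)
  -- equal derivatives on [0, ∞)
  have hK : ∀ x : ℝ, 0 ≤ x → HasDerivAt (fun r => F r - Hf r) 0 x := by
    intro x hx
    have hFx := hF' x hx
    have hHx := hHf' x
    have heq : ((n-1 : ℕ) * x ^ (n-1-1) * deriv w x + x ^ (n-1) * deriv (deriv w) x)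
        = (-c0 * (β * ((n:ℕ) * x ^ (n-1) * v x + x ^ n * deriv v x)
        + (α - n * β) * (x ^ (n-1) * v x))) := by
      rcases eq_or_lt_of_le hx with h0 | hxpos
      · rw [← h0]
        have hz1 : (0:ℝ) ^ (n-1-1) = 0 := by apply zero_pow; omega
        have hz2 : (0:ℝ) ^ (n-1) = 0 := by apply zero_pow; omega
        have hz3 : (0:ℝ) ^ n = 0 := by apply zero_pow; omega
        rw [hz1, hz2, hz3]; ring
      · have hodex := hode x hxpos
        have hxne : x ≠ 0 := ne_of_gt hxpos
        have hpow1 : x ^ (n-1) = x ^ (n-1-1) * x := by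
          rw [← pow_succ]; congr 1; omega
        have hpow2 : x ^ n = x ^ (n-1) * x := by
          conv_lhs => rw [hnn1]
          rw [pow_succ]
        have hNm : ((n:ℝ)-1)/m ≠ 0 := ne_of_gt (div_pos hN1 hm)
        have h3 : deriv (deriv w) x + ((n:ℝ)-1)/x * deriv w x
            = -(m/((n:ℝ)-1)) * (α * v x + β * x * deriv v x) := by
          apply mul_left_cancel₀ hNm
          have hr : ((n:ℝ)-1)/m * (-(m/((n:ℝ)-1)) * (α * v x + β * x * deriv v x))
              = -(α * v x + β * x * deriv v x) := by
            field_simp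
          rw [hr]
          linarith [hodex]
        have h4 : x * deriv (deriv w) x + ((n:ℝ)-1) * deriv w x
            = -(m/((n:ℝ)-1)) * x * (α * v x + β * x * deriv v x) := by
          have h5 := congrArg (fun t => x * t) h3
          rw [mul_add] at h5
          rw [show x * (((n:ℝ)-1)/x * deriv w x) = ((n:ℝ)-1) * deriv w x from by
            field_simp] at h5
          rw [h5]; ring
        rw [hnn, hc0_def, hpow2, hpow1]
        linear_combination (x ^ (n-1-1)) * h4
    rw [heq] at hFx
    have hsub := hFx.sub hHx
    rw [sub_self] at hsub
    exact hsub
  have hF0 : F 0 = 0 := by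
    simp [hF_def, zero_pow hn10]
  have hHf0 : Hf 0 = 0 := by
    simp [hHf_def, hI_def, intervalIntegral.integral_same, zero_pow (by omega : n ≠ 0)]
  have hFH : ∀ r : ℝ, 0 ≤ r → F r = Hf r := by
    intro r hr
    have hcont : ContinuousOn (fun t => F t - Hf t) (Set.Icc 0 r) :=
      fun t ht => ((hK t ht.1).continuousAt).continuousWithinAt
    have hcst := constant_of_has_deriv_right_zero hcont
      (fun t ht => (hK t ht.1).hasDerivWithinAt) r (Set.mem_Icc.mpr ⟨hr, le_rfl⟩)
    have h0 : F 0 - Hf 0 = 0 := by rw [hF0, hHf0]; ring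
    have : F r - Hf r = 0 := by rw [hcst, h0]
    linarith
  -- v is nonincreasing
  have hInonneg : ∀ r : ℝ, 0 ≤ r → 0 ≤ I r := fun r hr =>
    intervalIntegral.integral_nonneg hr
      (fun u hu => mul_nonneg (pow_nonneg hu.1 _) (hpos u hu.1).le)
  have hdwle : ∀ r : ℝ, 0 < r → deriv w r ≤ 0 := by
    intro r hr
    have h1 := hFH r hr.le
    have h2 : Hf r ≤ 0 := by
      have hI0 := hInonneg r hr.le
      have hvr := hpos r hr.le
      have hnn2 : 0 ≤ β * (r^n * v r) + (α - n*β) * I r :=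
        add_nonneg (mul_nonneg hβ0.le (mul_nonneg (pow_nonneg hr.le _) hvr.le))
          (mul_nonneg hαnβ hI0)
      have : Hf r = -c0 * (β * (r^n * v r) + (α - n*β) * I r) := rfl
      rw [this]
      nlinarith
    have h3 : r ^ (n-1) * deriv w r ≤ 0 := by
      rw [show r ^ (n-1) * deriv w r = F r from rfl, h1]; exact h2
    by_contra hcon
    push_neg at hcon
    nlinarith [mul_pos (pow_pos hr (n-1)) hcon]
  have hdvle : ∀ r : ℝ, 0 < r → deriv v r ≤ 0 := by
    intro r hr
    have h1 := hdw r (hpos r hr.le)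
    have h2 := hdwle r hr
    rw [h1] at h2
    by_contra hcon
    push_neg at hcon
    nlinarith [mul_pos (mul_pos hcon hm) (Real.rpow_pos_of_pos (hpos r hr.le) (m-1))]
  have hanti : AntitoneOn v (Set.Ici 0) := by
    apply antitoneOn_of_deriv_nonpos (convex_Ici 0) hvc.continuousOn
      (fun x _ => (hvd x).differentiableWithinAt)
    intro x hx
    rw [interior_Ici] at hx
    exact hdvle x hx
  -- lower bound for the integral
  have hIge : ∀ r : ℝ, 0 < r → v r * r^n / n ≤ I r := by
    intro r hr
    have h1 : (∫ s in (0:ℝ)..r, s^(n-1) * v r) ≤ I r := by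
      apply intervalIntegral.integral_mono_on hr.le
        (((continuous_pow _).mul continuous_const).intervalIntegrable _ _)
        (hicont.intervalIntegrable _ _)
      intro x hx
      have : v r ≤ v x := hanti (Set.mem_Ici.mpr hx.1) (Set.mem_Ici.mpr hr.le) hx.2
      exact mul_le_mul_of_nonneg_left this (pow_nonneg hx.1 _)
    have h2 : (∫ s in (0:ℝ)..r, s^(n-1) * v r) = v r * r^n / n := by
      rw [intervalIntegral.integral_mul_const, integral_pow]
      rw [show (n-1) + 1 = n from by omega]
      rw [zero_pow (by omega : n ≠ 0), hnn]
      field_simp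
      ring
    linarith
  -- key differential inequality
  have hkey : ∀ r : ℝ, 0 < r →
      deriv v r * m * v r ^ (m-1) ≤ -(m * α / ((n:ℝ) * ((n:ℝ)-1))) * r * v r := by
    intro r hr
    have h1 := hFH r hr.le
    have hVr := hpos r hr.le
    have hIr := hIge r hr
    have hp : 0 < r^(n-1) := pow_pos hr _
    have hpow2 : r ^ n = r^(n-1) * r := by conv_lhs => rw [hnn1]; rw [pow_succ]
    have h2 : Hf r ≤ -(c0 * α / n) * (r ^ n * v r) := by
      have h3 : (α - n*β) * (v r * r^n / n) ≤ (α - n*β) * I r :=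
        mul_le_mul_of_nonneg_left hIr hαnβ
      have h4 : β * (r^n * v r) + (α - n*β) * (v r * r^n / n)
          = (α/n) * (r^n * v r) := by field_simp; ring
      have h6' : (α/n) * (r^n * v r) ≤ β * (r^n*v r) + (α - n*β) * I r := by
        rw [← h4]; linarith
      have h5 : Hf r = -c0 * (β * (r^n * v r) + (α - n*β) * I r) := rfl
      rw [h5]
      have h7' := mul_le_mul_of_nonneg_left h6' hc0.le
      ring_nf at h7' ⊢
      linarith [h7']
    have h6 : r^(n-1) * deriv w r ≤ -(c0*α/n) * (r^n * v r) := by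
      rw [show r ^ (n-1) * deriv w r = F r from rfl, h1]; exact h2
    have h7 : r^(n-1) * (deriv v r * m * v r ^ (m-1))
        ≤ r^(n-1) * (-(m * α / ((n:ℝ) * ((n:ℝ)-1))) * r * v r) := by
      rw [← hdw r hVr]
      calc r^(n-1) * deriv w r ≤ -(c0*α/n) * (r^n * v r) := h6
        _ = r^(n-1) * (-(m * α / ((n:ℝ) * ((n:ℝ)-1))) * r * v r) := by
            rw [hpow2, hc0_def]; field_simp
    exact le_of_mul_le_mul_left h7 hp
  -- the function v^(m-1) - c2 r^2 is monotone
  set c2 : ℝ := α * (1 - m) / (2 * n * ((n:ℝ) - 1)) with hc2_def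
  have hc2 : 0 < c2 := by
    rw [hc2_def]
    apply div_pos (mul_pos hα0 h1m)
    nlinarith
  have huderiv : ∀ x : ℝ, 0 ≤ x →
      HasDerivAt (fun s => v s ^ (m-1)) (deriv v x * (m-1) * v x ^ (m-1-1)) x :=
    fun x hx => ((hvd x).hasDerivAt).rpow_const (Or.inl (hpos x hx).ne')
  have hu'ge : ∀ r : ℝ, 0 < r → 2 * c2 * r ≤ deriv v r * (m-1) * v r ^ (m-1-1) := by
    intro r hr
    have hV := hpos r hr.le
    have hA : (0:ℝ) < v r ^ (m-1-1) := Real.rpow_pos_of_pos hV _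
    have hsplit : v r ^ (m-1) = v r ^ (m-1-1) * v r := by
      conv_lhs => rw [show m-1 = (m-1-1) + 1 from by ring]
      rw [Real.rpow_add hV, Real.rpow_one]
    have hk := hkey r hr
    rw [hsplit] at hk
    have h1 : deriv v r * v r ^ (m-1-1) + (α / ((n:ℝ) * ((n:ℝ)-1))) * r ≤ 0 := by
      by_contra hcon
      push_neg at hcon
      have hEXP := mul_pos (mul_pos hm hV) hcon
      ring_nf at hEXP hk
      linarith [hEXP, hk]
    have h2 : 2 * c2 = (1-m) * (α / ((n:ℝ) * ((n:ℝ)-1))) := by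
      rw [hc2_def]; field_simp
    rw [h2]
    nlinarith [mul_nonneg h1m.le (neg_nonneg.mpr h1)]
  have hφd : ∀ x : ℝ, 0 ≤ x → HasDerivAt (fun s => v s ^ (m-1) - c2 * s^2)
      (deriv v x * (m-1) * v x ^ (m-1-1) - c2 * (2*x)) x := by
    intro x hx
    have h2 : HasDerivAt (fun s : ℝ => c2 * s^2) (c2 * (2*x)) x := by
      have := (hasDerivAt_pow 2 x).const_mul c2
      simpa using this
    exact (huderiv x hx).sub h2
  have hφmono : MonotoneOn (fun s => v s ^ (m-1) - c2 * s^2) (Set.Ici 0) := by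
    apply monotoneOn_of_deriv_nonneg (convex_Ici 0)
    · intro x hx
      exact ((hφd x hx).continuousAt).continuousWithinAt
    · intro x hx
      rw [interior_Ici] at hx
      exact (hφd x hx.le).differentiableAt.differentiableWithinAt
    · intro x hx
      rw [interior_Ici] at hx
      rw [(hφd x hx.le).deriv]
      have := hu'ge x hx
      linarith
  have hmain : ∀ r : ℝ, 0 < r → η ^ (m-1) + c2 * r^2 ≤ v r ^ (m-1) := by
    intro r hr
    have h1 := hφmono (Set.mem_Ici.mpr le_rfl) (Set.mem_Ici.mpr hr.le) hr.le
    simp only [hv0] at h1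
    have : η ^ (m-1) - c2 * 0^2 = η ^ (m-1) := by norm_num
    rw [this] at h1
    linarith
  constructor
  · -- first claim
    intro r hr
    have hA : 0 < η ^ (m-1) + c2 * r^2 := by
      have := Real.rpow_pos_of_pos hη (m-1)
      nlinarith
    have h1 := hmain r hr
    have hexp : -(1/(1-m)) = 1/(m-1) := by
      rw [show m - 1 = -(1-m) from by ring, div_neg]
    rw [hexp]
    calc v r = (v r ^ (m-1)) ^ (1/(m-1)) := by
          rw [← Real.rpow_mul (hpos r hr.le).le, mul_one_div,
            div_self (by linarith : m - 1 ≠ 0), Real.rpow_one]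
      _ ≤ (η ^ (m-1) + c2 * r^2) ^ (1/(m-1)) := by
          apply Real.rpow_le_rpow_of_nonpos hA h1
          apply le_of_lt
          exact div_neg_of_pos_of_neg one_pos (by linarith)
  · -- second claim
    intro r hr
    have hr0 : (0:ℝ) < r := lt_of_lt_of_le one_pos hr
    have h1 := hmain r hr0
    have hA2 : 0 < c2 * r^2 := mul_pos hc2 (by positivity)
    have hle : c2 * r^2 ≤ v r ^ (m-1) := by
      have := Real.rpow_pos_of_pos hη (m-1)
      nlinarith
    have hVp := hpos r hr0.le
    have hinv : v r ^ (1-m) = (v r ^ (m-1))⁻¹ := by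
      rw [← Real.rpow_neg hVp.le]
      congr 1; ring
    rw [hinv]
    have h2 : (v r ^ (m-1))⁻¹ ≤ (c2 * r^2)⁻¹ := inv_anti₀ hA2 hle
    calc r^2 * (v r ^ (m-1))⁻¹ ≤ r^2 * (c2*r^2)⁻¹ :=
          mul_le_mul_of_nonneg_left h2 (by positivity)
      _ = c2⁻¹ := by
          rw [mul_comm c2 (r^2), mul_inv, ← mul_assoc,
            mul_inv_cancel₀ (by positivity : (r:ℝ)^2 ≠ 0), one_mul]
      _ = 2*n*((n:ℝ)-1)/(α*(1-m)) := by rw [hc2_def, inv_div]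
end

section
/- Let v be a solution of the radial ODE ((n-1)/m)((v^m)'' + ((n-1)/r)(v^m)') + αv + βrv' = 0 on (0,∞), v > 0, with v(0) = η > 0 and v'(0) = 0, where α > 0, β ≠ 0, and mα/β ≤ n-2. Then v(r) + (β/α) r v'(r) > 0 for all r ≥ 0, and v'(r) < 0 for all r > 0. -/
open Filter Topology MeasureTheory

set_option maxHeartbeats 1000000 in
theorem stmt_5 (n : ℕ) (hn : 3 ≤ n) (m α β η : ℝ)
    (hm : 0 < m) (hm2 : m < ((n : ℝ) - 2) / n) (hη : 0 < η)
    (v : ℝ → ℝ) (hv : ContDiff ℝ 2 v) (hpos : ∀ r, 0 ≤ r → 0 < v r)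
    (hode : ∀ r, 0 < r →
      ((n : ℝ) - 1) / m * (deriv (deriv (fun s => v s ^ m)) r
        + (((n : ℝ) - 1) / r) * deriv (fun s => v s ^ m) r)
      + α * v r + β * r * deriv v r = 0)
    (hv0 : v 0 = η) (hv0d : deriv v 0 = 0)
    (hα : 0 < α) (hβ : β ≠ 0) (hαβ : m * α / β ≤ (n : ℝ) - 2) :
    (∀ r, 0 ≤ r → v r + (β / α) * r * deriv v r > 0) ∧
    (∀ r, 0 < r → deriv v r < 0) := by
  have hn3 : (3:ℝ) ≤ (n:ℝ) := by exact_mod_cast hn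
  have hn1 : (0:ℝ) < (n:ℝ) - 1 := by linarith
  have hmne : m ≠ 0 := ne_of_gt hm
  have hαne : α ≠ 0 := ne_of_gt hα
  -- regularity
  have hv2 : ContDiff ℝ ((1:ℕ) + 1) v := by exact_mod_cast hv
  obtain ⟨hvd, -, hdvC1⟩ := contDiff_succ_iff_deriv.mp hv2
  have hdvd : Differentiable ℝ (deriv v) := hdvC1.differentiable (by simp)
  have hvc : Continuous v := hvd.continuous
  have hdvc : Continuous (deriv v) := hdvd.continuous
  set dv := deriv v with hdvdef
  set ddv := deriv dv with hddvdef
  have hder : ∀ s : ℝ, HasDerivAt v (dv s) s := fun s => (hvd s).hasDerivAt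
  have hdder : ∀ s : ℝ, HasDerivAt dv (ddv s) s := fun s => (hdvd s).hasDerivAt
  have hU : IsOpen {s : ℝ | 0 < v s} := isOpen_lt continuous_const hvc
  -- rpow rewriting helpers
  have e1 : ∀ (x p : ℝ), 0 < x → x ^ (p - 1) = x ^ p / x := by
    intro x p hx; rw [Real.rpow_sub hx, Real.rpow_one]
  have e2 : ∀ (x p : ℝ), 0 < x → x ^ (p - 2) = x ^ p / x / x := by
    intro x p hx
    rw [show p - 2 = p - 1 - 1 by ring, Real.rpow_sub hx, Real.rpow_sub hx, Real.rpow_one]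
  have e3 : ∀ (x : ℝ), 0 < x → x ^ (1 - m) = x / x ^ m := by
    intro x hx; rw [Real.rpow_sub hx, Real.rpow_one]
  -- first derivative of v^m
  have hrpow : ∀ (p : ℝ) (s : ℝ), 0 < v s →
      HasDerivAt (fun t => v t ^ p) (p * v s ^ (p - 1) * dv s) s := by
    intro p s hs
    have := (hder s).rpow_const (p := p) (Or.inl hs.ne')
    convert this using 1; ring
  have hW : ∀ s, 0 < v s → HasDerivAt (fun t => v t ^ (m - 1) * dv t)
      ((m - 1) * v s ^ (m - 2) * dv s * dv s + v s ^ (m - 1) * ddv s) s := by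
    intro s hs
    have h1 := (hrpow (m - 1) s hs).mul (hdder s)
    rw [show m - 1 - 1 = m - 2 by ring] at h1
    exact h1
  have hwm : ∀ s, 0 < v s →
      HasDerivAt (fun t => v t ^ m) (m * (v s ^ (m - 1) * dv s)) s := by
    intro s hs
    have h1 := hrpow m s hs
    rw [show m * (v s ^ (m - 1) * dv s) = m * v s ^ (m - 1) * dv s by ring]
    exact h1
  have hderivwm : ∀ s, 0 < v s → deriv (fun t => v t ^ m) s = m * (v s ^ (m - 1) * dv s) :=
    fun s hs => (hwm s hs).deriv
  have hd2wm : ∀ s, 0 < v s → deriv (deriv (fun t => v t ^ m)) s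
      = m * ((m - 1) * v s ^ (m - 2) * dv s * dv s + v s ^ (m - 1) * ddv s) := by
    intro s hs
    have hev : deriv (fun t => v t ^ m) =ᶠ[𝓝 s] fun t => m * (v t ^ (m - 1) * dv t) := by
      filter_upwards [hU.mem_nhds hs] with t ht using hderivwm t ht
    rw [hev.deriv_eq]
    exact ((hW s hs).const_mul m).deriv
  -- the ODE in cleared polynomial form
  have hEq : ∀ r, 0 < r →
      ((n:ℝ) - 1) * ((m - 1) * v r ^ m * dv r * dv r * r + v r ^ m * ddv r * v r * r
        + ((n:ℝ) - 1) * v r ^ m * dv r * v r)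
      + (α * v r + β * r * dv r) * (v r * v r * r) = 0 := by
    intro r hr
    have hvr := hpos r hr.le
    have h0 := hode r hr
    rw [hd2wm r hvr, hderivwm r hvr] at h0
    rw [e2 (v r) m hvr, e1 (v r) m hvr] at h0
    have hvne : v r ≠ 0 := hvr.ne'
    have hrne : r ≠ 0 := hr.ne'
    have h3 : m * (v r * v r) ≠ 0 := by positivity
    field_simp at h0
    apply mul_left_cancel₀ h3
    rw [mul_zero]
    linear_combination m * (v r * v r) * h0
  -- solve for ddv
  have hD : ∀ r, 0 < r → ddv r =
      (-(((n:ℝ) - 1) * ((m - 1) * v r ^ m * dv r * dv r * r + ((n:ℝ) - 1) * v r ^ m * dv r * v r))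
        - (α * v r + β * r * dv r) * (v r * v r * r)) / (((n:ℝ) - 1) * (v r ^ m * v r * r)) := by
    intro r hr
    have hvr := hpos r hr.le
    have hXne : v r ^ m ≠ 0 := (Real.rpow_pos_of_pos hvr m).ne'
    have hden : ((n:ℝ) - 1) * (v r ^ m * v r * r) ≠ 0 := by
      apply mul_ne_zero hn1.ne'
      exact mul_ne_zero (mul_ne_zero hXne hvr.ne') hr.ne'
    rw [eq_div_iff hden]
    linear_combination hEq r hr
  -- the parameter μ and sign ε
  set μ := m * α / β with hμdef
  have hεex : ∀ t : ℝ, 0 < t → t ^ μ ≠ 0 := fun t ht => (Real.rpow_pos_of_pos ht μ).ne'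
  set ε : ℝ := if 0 < β then 1 else -1 with hεdef
  have hεβ : 0 < ε * β := by
    by_cases hb : 0 < β
    · simp only [hεdef, if_pos hb]; linarith
    · have hb' : β < 0 := lt_of_le_of_ne (not_lt.mp hb) hβ
      simp only [hεdef, if_neg hb]; linarith
  have hεμ : 0 < ε * μ := by
    have h1 : ε * μ = (ε * β) * (m * α) / (β * β) := by
      rw [hμdef]; field_simp
    rw [h1]
    exact div_pos (mul_pos hεβ (mul_pos hm hα)) (mul_self_pos.mpr hβ)
  -- the function Q and its derivative
  set Qq : ℝ → ℝ := fun t => μ * (t ^ (μ - 1) * v t ^ m) + m * (t ^ μ * (v t ^ (m - 1) * dv t))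
    with hQqdef
  set aa : ℝ → ℝ := fun t => -(((n:ℝ) - 1) - 2 * μ) / t - β / ((n:ℝ) - 1) * v t ^ (1 - m) * t
    with haadef
  set bb : ℝ → ℝ := fun t => μ * (((n:ℝ) - 2) - μ) / t ^ 2 with hbbdef
  have hQd : ∀ t, 0 < t → HasDerivAt Qq
      (μ * ((μ - 1) * t ^ (μ - 2) * v t ^ m + t ^ (μ - 1) * (m * (v t ^ (m - 1) * dv t)))
        + m * (μ * t ^ (μ - 1) * (v t ^ (m - 1) * dv t)
          + t ^ μ * ((m - 1) * v t ^ (m - 2) * dv t * dv t + v t ^ (m - 1) * ddv t))) t := by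
    intro t ht
    have hvt := hpos t ht.le
    have h1 : HasDerivAt (fun u : ℝ => u ^ (μ - 1)) ((μ - 1) * t ^ (μ - 1 - 1)) t :=
      Real.hasDerivAt_rpow_const (Or.inl ht.ne')
    have h2 : HasDerivAt (fun u : ℝ => u ^ μ) (μ * t ^ (μ - 1)) t :=
      Real.hasDerivAt_rpow_const (Or.inl ht.ne')
    have h3 := (h1.mul (hwm t hvt)).const_mul μ
    have h4 := (h2.mul (hW t hvt)).const_mul m
    have h5 := h3.add h4
    rw [show μ - 1 - 1 = μ - 2 by ring] at h5
    exact h5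
  -- Q in terms of the barrier function
  have hQh : ∀ t, 0 < t → Qq t
      = μ * (t ^ μ / t * (v t ^ m / v t)) * (v t + β / α * t * dv t) := by
    intro t ht
    have hvt := hpos t ht.le
    have hX : v t ^ m ≠ 0 := (Real.rpow_pos_of_pos hvt m).ne'
    have hY : t ^ μ ≠ 0 := hεex t ht
    simp only [hQqdef]
    rw [e1 (v t) m hvt, e1 t μ ht]
    set X := v t ^ m with hXdef
    set Y := t ^ μ with hYdef
    rw [hμdef]
    field_simp
    try ring
  -- the key differential identity
  have hkey : ∀ t, 0 < t →
      (μ * ((μ - 1) * t ^ (μ - 2) * v t ^ m + t ^ (μ - 1) * (m * (v t ^ (m - 1) * dv t)))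
        + m * (μ * t ^ (μ - 1) * (v t ^ (m - 1) * dv t)
          + t ^ μ * ((m - 1) * v t ^ (m - 2) * dv t * dv t + v t ^ (m - 1) * ddv t)))
      = aa t * Qq t + bb t * (t ^ μ * v t ^ m) := by
    intro t ht
    have hvt := hpos t ht.le
    have hX : v t ^ m ≠ 0 := (Real.rpow_pos_of_pos hvt m).ne'
    have hY : t ^ μ ≠ 0 := hεex t ht
    simp only [hQqdef, haadef, hbbdef]
    rw [hD t ht, e2 (v t) m hvt, e1 (v t) m hvt, e3 (v t) hvt, e2 t μ ht, e1 t μ ht]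
    set X := v t ^ m with hXdef
    set Y := t ^ μ with hYdef
    rw [hμdef]
    field_simp
    try ring
  -- continuity/integrability of aa
  have haacont : ContinuousOn aa (Set.Ioi 0) := by
    intro t ht
    have ht0 : (0:ℝ) < t := ht
    have hvt := hpos t ht0.le
    apply ContinuousAt.continuousWithinAt
    have c1 : ContinuousAt (fun u : ℝ => -(((n:ℝ) - 1) - 2 * μ) / u) t :=
      continuousAt_const.div continuousAt_id ht0.ne'
    have c2 : ContinuousAt (fun u : ℝ => β / ((n:ℝ) - 1) * v u ^ (1 - m) * u) t :=
      (continuousAt_const.mul ((hvc.continuousAt).rpow_const (Or.inl hvt.ne'))).mul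
        continuousAt_id
    exact c1.sub c2
  have hInt : ∀ x y : ℝ, 0 < x → 0 < y → IntervalIntegrable aa volume x y := by
    intro x y hx hy
    apply (haacont.mono ?_).intervalIntegrable
    intro z hz
    exact lt_of_lt_of_le (lt_min hx hy) hz.1
  -- continuity of the barrier function
  have hfc : Continuous fun r : ℝ => v r + β / α * r * dv r := by
    exact hvc.add ((continuous_const.mul continuous_id).mul hdvc)
  -- part 1
  have part1 : ∀ r, 0 ≤ r → 0 < v r + β / α * r * dv r := by
    by_contra hcon
    push_neg at hcon
    obtain ⟨r₁, hr₁0, hr₁⟩ := hcon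
    set T : Set ℝ := Set.Ici 0 ∩ (fun r : ℝ => v r + β / α * r * dv r) ⁻¹' Set.Iic 0 with hTdef
    have hmemT : ∀ r : ℝ, r ∈ T ↔ 0 ≤ r ∧ v r + β / α * r * dv r ≤ 0 := by
      intro r
      simp [hTdef]
    have hTne : T.Nonempty := ⟨r₁, (hmemT r₁).mpr ⟨hr₁0, hr₁⟩⟩
    have hTbdd : BddBelow T := ⟨0, fun x hx => ((hmemT x).mp hx).1⟩
    have hTclosed : IsClosed T := isClosed_Ici.inter (isClosed_Iic.preimage hfc)
    set r₀ := sInf T with hr₀def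
    have hr₀T := hTclosed.csInf_mem hTne hTbdd
    obtain ⟨hr₀0, hr₀le⟩ := (hmemT r₀).mp hr₀T
    have hf0 : v 0 + β / α * 0 * dv 0 = η := by rw [hv0]; ring
    have hr₀pos : 0 < r₀ := by
      rcases lt_or_eq_of_le hr₀0 with h | h
      · exact h
      · exfalso; rw [← h] at hr₀le; rw [hf0] at hr₀le; linarith
    have hbefore : ∀ s, 0 ≤ s → s < r₀ → 0 < v s + β / α * s * dv s := by
      intro s h0 hs
      by_contra hc
      push_neg at hc
      exact absurd (csInf_le hTbdd ((hmemT s).mpr ⟨h0, hc⟩)) (not_le.mpr hs)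
    have hfr₀ : v r₀ + β / α * r₀ * dv r₀ = 0 := by
      refine le_antisymm hr₀le ?_
      have hten : Filter.Tendsto (fun r : ℝ => v r + β / α * r * dv r) (𝓝[<] r₀)
          (𝓝 (v r₀ + β / α * r₀ * dv r₀)) := (hfc.continuousAt).continuousWithinAt.tendsto
      refine ge_of_tendsto hten ?_
      filter_upwards [Ioo_mem_nhdsLT_of_mem (show r₀ ∈ Set.Ioc 0 r₀ from ⟨hr₀pos, le_rfl⟩)]
        with s hs
      exact (hbefore s hs.1.le hs.2).le
    -- integrating factor
    set A : ℝ → ℝ := fun t => ∫ s in (r₀/2)..t, aa s with hAdef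
    have hApd : ∀ t : ℝ, 0 < t → HasDerivAt A (aa t) t := by
      intro t ht
      exact intervalIntegral.integral_hasDerivAt_right (hInt _ _ (by linarith) ht)
        ((haacont.stronglyMeasurableAtFilter isOpen_Ioi) t ht)
        (haacont.continuousAt (isOpen_Ioi.mem_nhds ht))
    set R : ℝ → ℝ := fun t => ε * Qq t * Real.exp (-(A t)) with hRdef
    have hRderiv : ∀ t, 0 < t →
        HasDerivAt R (ε * (bb t * (t ^ μ * v t ^ m)) * Real.exp (-(A t))) t := by
      intro t ht
      have h5 := ((hQd t ht).const_mul ε).mul (((hApd t ht).neg).exp)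
      refine h5.congr_deriv ?_
      rw [hkey t ht]
      simp only [Pi.neg_apply]
      ring
    have hmono : MonotoneOn R (Set.Icc (r₀/2) r₀) := by
      apply monotoneOn_of_deriv_nonneg (convex_Icc _ _)
      · intro t ht
        have ht0 : 0 < t := lt_of_lt_of_le (by linarith) ht.1
        exact (hRderiv t ht0).continuousAt.continuousWithinAt
      · rw [interior_Icc]
        intro t ht
        have ht0 : 0 < t := lt_trans (by linarith) ht.1
        exact (hRderiv t ht0).differentiableAt.differentiableWithinAt
      · rw [interior_Icc]
        intro t ht
        have ht0 : 0 < t := lt_trans (by linarith) ht.1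
        have hvt := hpos t ht0.le
        rw [(hRderiv t ht0).deriv]
        have h1 : 0 ≤ ((n:ℝ) - 2) - μ := by linarith [hαβ]
        have heq : ε * (bb t * (t ^ μ * v t ^ m)) * Real.exp (-(A t))
            = (ε * μ) * ((((n:ℝ) - 2) - μ) / t ^ 2) * ((t ^ μ * v t ^ m) * Real.exp (-(A t)))
            := by
          simp only [hbbdef]; ring
        rw [heq]
        apply mul_nonneg (mul_nonneg hεμ.le (div_nonneg h1 (sq_nonneg t)))
        exact mul_nonneg (mul_pos (Real.rpow_pos_of_pos ht0 μ)
          (Real.rpow_pos_of_pos hvt m)).le (Real.exp_pos _).le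
    have hQr0 : Qq r₀ = 0 := by
      rw [hQh r₀ hr₀pos, hfr₀, mul_zero]
    have hR0 : R r₀ = 0 := by
      simp only [hRdef]; rw [hQr0]; ring
    have h2pos : 0 < r₀ / 2 := by linarith
    have hfhalf : 0 < v (r₀/2) + β / α * (r₀/2) * dv (r₀/2) :=
      hbefore _ h2pos.le (by linarith)
    have hRhalf : 0 < R (r₀/2) := by
      simp only [hRdef]
      rw [hQh _ h2pos]
      have heq : ε * (μ * ((r₀/2) ^ μ / (r₀/2) * (v (r₀/2) ^ m / v (r₀/2)))
            * (v (r₀/2) + β / α * (r₀/2) * dv (r₀/2))) * Real.exp (-(A (r₀/2)))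
          = (ε * μ) * (((r₀/2) ^ μ / (r₀/2) * (v (r₀/2) ^ m / v (r₀/2)))
            * ((v (r₀/2) + β / α * (r₀/2) * dv (r₀/2)) * Real.exp (-(A (r₀/2))))) := by
        ring
      rw [heq]
      apply mul_pos hεμ
      apply mul_pos
      · exact mul_pos (div_pos (Real.rpow_pos_of_pos h2pos μ) h2pos)
          (div_pos (Real.rpow_pos_of_pos (hpos _ h2pos.le) m) (hpos _ h2pos.le))
      · exact mul_pos hfhalf (Real.exp_pos _)
    have hmem1 : r₀/2 ∈ Set.Icc (r₀/2) r₀ := ⟨le_rfl, by linarith⟩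
    have hmem2 : r₀ ∈ Set.Icc (r₀/2) r₀ := ⟨by linarith, le_rfl⟩
    have hle := hmono hmem1 hmem2 (by linarith)
    rw [hR0] at hle
    linarith
  -- part 2
  have part2 : ∀ r, 0 < r → dv r < 0 := by
    intro r hr
    set G : ℝ → ℝ := fun t => t ^ (n - 1) * (v t ^ (m - 1) * dv t) with hGdef
    have hGd : ∀ t, 0 < t → HasDerivAt G
        ((↑(n - 1) * t ^ (n - 1 - 1)) * (v t ^ (m - 1) * dv t)
          + t ^ (n - 1) * ((m - 1) * v t ^ (m - 2) * dv t * dv t + v t ^ (m - 1) * ddv t)) t :=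
      fun t ht => (hasDerivAt_pow (n - 1) t).mul (hW t (hpos t ht.le))
    have hGv : ∀ t, 0 < t →
        (↑(n - 1) * t ^ (n - 1 - 1)) * (v t ^ (m - 1) * dv t)
          + t ^ (n - 1) * ((m - 1) * v t ^ (m - 2) * dv t * dv t + v t ^ (m - 1) * ddv t)
        = -(t ^ (n - 1) * (α * v t + β * t * dv t)) / ((n:ℝ) - 1) := by
      intro t ht
      have hvt := hpos t ht.le
      have hX : v t ^ m ≠ 0 := (Real.rpow_pos_of_pos hvt m).ne'
      rw [hD t ht, e2 (v t) m hvt, e1 (v t) m hvt]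
      rw [show n - 1 - 1 = n - 2 from by omega, show n - 1 = (n - 2) + 1 from by omega,
        pow_succ, Nat.cast_add, Nat.cast_sub (by omega : 2 ≤ n), Nat.cast_ofNat,
        Nat.cast_one]
      field_simp
      ring
    have hGcont : ContinuousOn G (Set.Icc 0 r) := by
      intro t ht
      have hvt := hpos t ht.1
      exact (((continuous_pow (n - 1)).continuousAt).mul
        (((hvc.continuousAt).rpow_const (Or.inl hvt.ne')).mul
          hdvc.continuousAt)).continuousWithinAt
    have hanti : StrictAntiOn G (Set.Icc 0 r) := by
      apply strictAntiOn_of_deriv_neg (convex_Icc _ _) hGcont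
      rw [interior_Icc]
      intro t ht
      rw [(hGd t ht.1).deriv, hGv t ht.1]
      have hpt := part1 t ht.1.le
      have h1 : 0 < α * v t + β * t * dv t := by
        have h2 : α * v t + β * t * dv t = α * (v t + β / α * t * dv t) := by
          field_simp
        rw [h2]
        exact mul_pos hα hpt
      have h3 : 0 < t ^ (n - 1) := pow_pos ht.1 _
      apply div_neg_of_neg_of_pos _ hn1
      have := mul_pos h3 h1
      linarith
    have hGr : G r < G 0 := hanti ⟨le_rfl, hr.le⟩ ⟨hr.le, le_rfl⟩ hr
    have hG0 : G 0 = 0 := by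
      simp only [hGdef]
      rw [zero_pow (by omega : n - 1 ≠ 0), zero_mul]
    rw [hG0] at hGr
    have h3 : 0 < r ^ (n - 1) := pow_pos hr _
    have h4 : 0 < v r ^ (m - 1) := Real.rpow_pos_of_pos (hpos r hr.le) _
    simp only [hGdef] at hGr
    by_contra hge
    push_neg at hge
    nlinarith [mul_nonneg (mul_nonneg h3.le h4.le) hge]
  exact ⟨fun r hr => part1 r hr, part2⟩
end

section
/- Let v be a solution of the radial ODE ((n-1)/m)((v^m)'' + ((n-1)/r)(v^m)') + αv + βrv' = 0 on (0,∞), v > 0, with v(0) = η > 0 and v'(0) = 0, where α > 0, β > 0, and mα/β < n-2. Then for all r > 0: -(n-2)/m < -α/β < r v'(r)/v(r) < 0. -/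
open Filter Topology MeasureTheory

set_option maxHeartbeats 1600000 in
theorem stmt_6 (n : ℕ) (hn : 3 ≤ n) (m α β η : ℝ)
    (hm : 0 < m) (hm2 : m < ((n : ℝ) - 2) / n) (hη : 0 < η)
    (v : ℝ → ℝ) (hv : ContDiff ℝ 2 v) (hpos : ∀ r, 0 ≤ r → 0 < v r)
    (hode : ∀ r, 0 < r →
      ((n : ℝ) - 1) / m * (deriv (deriv (fun s => v s ^ m)) r
        + (((n : ℝ) - 1) / r) * deriv (fun s => v s ^ m) r)
      + α * v r + β * r * deriv v r = 0)
    (hv0 : v 0 = η) (hv0d : deriv v 0 = 0)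
    (hα : 0 < α) (hβ : 0 < β) (hαβ : m * α / β < (n : ℝ) - 2) :
    ∀ r, 0 < r →
      -(((n : ℝ) - 2) / m) < -(α / β) ∧
      -(α / β) < r * deriv v r / v r ∧
      r * deriv v r / v r < 0 := by
  have hdv : Differentiable ℝ v := hv.differentiable (by norm_num)
  have hC1 : ContDiff ℝ 1 (deriv v) := by
    have h : ContDiff ℝ ((1:ℕ) + 1) v := by exact_mod_cast hv
    exact (contDiff_succ_iff_deriv.mp h).2.2
  have hdv2 : Differentiable ℝ (deriv v) := hC1.differentiable (by norm_num)
  have hcv2 : Continuous (deriv v) := hdv2.continuous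
  have hn3 : (3:ℝ) ≤ (n:ℝ) := by exact_mod_cast hn
  have hn1 : (0:ℝ) < (n:ℝ) - 1 := by linarith
  have hn2 : (0:ℝ) < (n:ℝ) - 2 := by linarith
  set p : ℝ → ℝ := fun s => m * v s ^ (m - 1) * deriv v s with hp
  set P : ℝ → ℝ := fun s =>
    m * ((m - 1) * v s ^ (m - 2) * deriv v s * deriv v s
      + v s ^ (m - 1) * deriv (deriv v) s) with hP
  have hUopen : IsOpen {s : ℝ | 0 < v s} := isOpen_lt continuous_const hdv.continuous
  have hw' : ∀ x, 0 < v x → HasDerivAt (fun s => v s ^ m) (p x) x := by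
    intro x hx
    have h1 : HasDerivAt (fun y : ℝ => y ^ m) (m * v x ^ (m - 1)) (v x) :=
      Real.hasDerivAt_rpow_const (Or.inl (ne_of_gt hx))
    have h2 := h1.comp x (hdv x).hasDerivAt
    simpa [hp, Function.comp_def, mul_assoc] using h2
  have hderivw : ∀ x, 0 < v x → deriv (fun s => v s ^ m) x = p x :=
    fun x hx => (hw' x hx).deriv
  have hp' : ∀ x, 0 < v x → HasDerivAt p (P x) x := by
    intro x hx
    have h1 : HasDerivAt (fun y : ℝ => y ^ (m - 1)) ((m - 1) * v x ^ (m - 1 - 1)) (v x) :=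
      Real.hasDerivAt_rpow_const (Or.inl (ne_of_gt hx))
    have h2 : HasDerivAt (fun s => v s ^ (m - 1)) ((m - 1) * v x ^ (m - 2) * deriv v x) x := by
      have := h1.comp x (hdv x).hasDerivAt
      simpa [Function.comp_def, show m - 1 - 1 = m - 2 by ring, mul_assoc] using this
    have h3 := (h2.mul (hdv2 x).hasDerivAt).const_mul m
    have h4 : (fun s => m * (v s ^ (m - 1) * deriv v s)) = p := by
      funext s; simp [hp]; ring
    simp only [Pi.mul_def] at h3
    rw [h4] at h3
    have h5 : m * (((m - 1) * v x ^ (m - 2) * deriv v x) * deriv v x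
        + v x ^ (m - 1) * deriv (deriv v) x) = P x := by
      simp only [hP]
    exact h5 ▸ h3
  have hderivP : ∀ x, 0 < v x → deriv (deriv (fun s => v s ^ m)) x = P x := by
    intro x hx
    have hev : deriv (fun s => v s ^ m) =ᶠ[𝓝 x] p := by
      filter_upwards [hUopen.mem_nhds hx] with s hs using hderivw s hs
    rw [hev.deriv_eq]
    exact (hp' x hx).deriv
  have hode' : ∀ r, 0 < r →
      ((n:ℝ) - 1) / m * (P r + (((n:ℝ) - 1) / r) * p r)
        + α * v r + β * r * deriv v r = 0 := by
    intro r hr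
    have h := hode r hr
    rwa [hderivP r (hpos r hr.le), hderivw r (hpos r hr.le)] at h
  set g : ℝ → ℝ := fun r => α * v r + β * r * deriv v r with hg
  have hgcont : Continuous g := by
    apply Continuous.add
    · exact continuous_const.mul hdv.continuous
    · exact (continuous_const.mul continuous_id).mul hcv2
  have hg0 : g 0 = α * η := by simp [hg, hv0]
  -- Step B : g > 0 on (0,∞)
  have hB : ∀ r, 0 < r → 0 < g r := by
    by_contra hcon
    push_neg at hcon
    obtain ⟨r₁, hr₁, hgr₁⟩ := hcon
    set T : Set ℝ := Set.Icc 0 r₁ ∩ g ⁻¹' Set.Iic 0 with hT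
    have hTclosed : IsClosed T := isClosed_Icc.inter (isClosed_Iic.preimage hgcont)
    have hTne : T.Nonempty := ⟨r₁, ⟨hr₁.le, le_rfl⟩, hgr₁⟩
    have hTbdd : BddBelow T := ⟨0, fun r hr => hr.1.1⟩
    set r₀ := sInf T with hr₀
    have hr₀T : r₀ ∈ T := hTclosed.csInf_mem hTne hTbdd
    have hr₀0 : 0 < r₀ := by
      rcases hr₀T.1.1.lt_or_eq with h | h
      · exact h
      · exfalso
        have : g r₀ ≤ 0 := hr₀T.2
        rw [← h, hg0] at this
        nlinarith
    have hgpos : ∀ r, 0 ≤ r → r < r₀ → 0 < g r := by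
      intro r h0 hrlt
      by_contra hle
      push_neg at hle
      exact absurd (csInf_le hTbdd ⟨⟨h0, hrlt.le.trans hr₀T.1.2⟩, hle⟩) (not_le.mpr hrlt)
    have hgr₀ : g r₀ = 0 := by
      have h1 : g r₀ ≤ 0 := hr₀T.2
      have h2 : 0 ≤ g r₀ := by
        have htend : Filter.Tendsto g (𝓝[<] r₀) (𝓝 (g r₀)) :=
          (hgcont.tendsto r₀).mono_left nhdsWithin_le_nhds
        refine ge_of_tendsto htend ?_
        filter_upwards [Ioo_mem_nhdsLT_of_mem (⟨hr₀0, le_rfl⟩ : r₀ ∈ Set.Ioc 0 r₀)] with r hr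
        exact (hgpos r hr.1.le hr.2).le
      linarith
    have hVpos : 0 < v r₀ := hpos r₀ hr₀0.le
    have hβr : (0:ℝ) < β * r₀ := mul_pos hβ hr₀0
    have hV' : deriv v r₀ = -(α * v r₀) / (β * r₀) := by
      have h : α * v r₀ + β * r₀ * deriv v r₀ = 0 := hgr₀
      field_simp
      linarith
    -- extract second-derivative relation from the ODE at r₀
    have hPp : P r₀ + (((n:ℝ) - 1) / r₀) * p r₀ = 0 := by
      have h := hode' r₀ hr₀0
      have hgz : α * v r₀ + β * r₀ * deriv v r₀ = 0 := hgr₀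
      have h2 : ((n:ℝ) - 1) / m * (P r₀ + (((n:ℝ) - 1) / r₀) * p r₀) = 0 := by linarith
      have h3 : ((n:ℝ) - 1) / m ≠ 0 := by positivity
      exact (mul_eq_zero.mp h2).resolve_left h3
    have hW1 : v r₀ ^ (m - 1) = v r₀ ^ m / v r₀ := by
      rw [show m - 1 = m - 1 from rfl, Real.rpow_sub hVpos, Real.rpow_one]
    have hW2 : v r₀ ^ (m - 2) = v r₀ ^ m / (v r₀ * v r₀) := by
      rw [show m - 2 = m - 1 - 1 by ring, Real.rpow_sub hVpos, Real.rpow_one, hW1]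
      field_simp
    have hWpos : 0 < v r₀ ^ m := Real.rpow_pos_of_pos hVpos m
    have hG : α * v r₀ + β * r₀ * deriv v r₀ = 0 := hgr₀
    have hfac : m * v r₀ ^ m * (v r₀ * v r₀) *
        ((m - 1) * (deriv v r₀) ^ 2 * r₀ + deriv (deriv v) r₀ * v r₀ * r₀
          + ((n:ℝ) - 1) * deriv v r₀ * v r₀) = 0 := by
      have h := hPp
      rw [hP, hp] at h
      simp only [hW1, hW2] at h
      have hVne : v r₀ ≠ 0 := ne_of_gt hVpos
      have hr₀ne : r₀ ≠ 0 := ne_of_gt hr₀0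
      field_simp at h
      linear_combination (v r₀ * v r₀) * h
    have hVV : m * v r₀ ^ m * (v r₀ * v r₀) ≠ 0 := by positivity
    have hrel : (m - 1) * (deriv v r₀) ^ 2 * r₀ + deriv (deriv v) r₀ * v r₀ * r₀
        + ((n:ℝ) - 1) * deriv v r₀ * v r₀ = 0 :=
      (mul_eq_zero.mp hfac).resolve_left hVV
    have hgd : HasDerivAt g ((α + β) * deriv v r₀ + β * r₀ * deriv (deriv v) r₀) r₀ := by
      have h1 : HasDerivAt (fun r => α * v r) (α * deriv v r₀) r₀ :=
        ((hdv r₀).hasDerivAt).const_mul α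
      have h2 : HasDerivAt (fun r : ℝ => r * deriv v r)
          (1 * deriv v r₀ + r₀ * deriv (deriv v) r₀) r₀ :=
        (hasDerivAt_id r₀).mul (hdv2 r₀).hasDerivAt
      have h3 := h1.add (h2.const_mul β)
      have h4 : (fun r => α * v r + β * (r * deriv v r)) = g := by
        funext r; simp only [hg]; ring
      simp only [Pi.add_def] at h3
      rw [h4] at h3
      exact h3.congr_deriv (by ring)
    have hDmul : ((α + β) * deriv v r₀ + β * r₀ * deriv (deriv v) r₀) * (β * r₀ * v r₀)
        = α * (v r₀) ^ 2 * (((n:ℝ) - 2) * β - m * α) := by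
      linear_combination (β ^ 2 * r₀) * hrel +
        ((α + β) * v r₀ - (m - 1) * ((α * v r₀ + β * r₀ * deriv v r₀) - 2 * α * v r₀)
          - ((n:ℝ) - 1) * β * v r₀) * hG
    have hrhs : 0 < α * (v r₀) ^ 2 * (((n:ℝ) - 2) * β - m * α) := by
      have h1 : m * α < ((n:ℝ) - 2) * β := by
        rw [div_lt_iff₀ hβ] at hαβ; linarith
      have h2 : 0 < ((n:ℝ) - 2) * β - m * α := by linarith
      positivity
    have hDpos : 0 < (α + β) * deriv v r₀ + β * r₀ * deriv (deriv v) r₀ := by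
      have hc : 0 < β * r₀ * v r₀ := by positivity
      rcases mul_pos_iff.mp (hDmul ▸ hrhs) with ⟨h, _⟩ | ⟨_, h⟩
      · exact h
      · linarith
    -- contradiction: g positive left of r₀, g r₀ = 0, g' r₀ > 0
    have hslope := hasDerivAt_iff_tendsto_slope.mp hgd
    have hev : ∀ᶠ r in 𝓝[<] r₀, 0 < slope g r₀ r := by
      have h1 : ∀ᶠ x in 𝓝[≠] r₀, 0 < slope g r₀ x :=
        hslope.eventually (eventually_gt_nhds hDpos)
      exact h1.filter_mono (nhdsWithin_mono r₀ (fun x hx => ne_of_lt hx))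
    obtain ⟨r, hs, hr⟩ :=
      (hev.and (Ioo_mem_nhdsLT_of_mem (⟨hr₀0, le_rfl⟩ : r₀ ∈ Set.Ioc 0 r₀))).exists
    have hdiff : g r - g r₀ < 0 := by
      have h1 : slope g r₀ r = (g r - g r₀) / (r - r₀) := slope_def_field g r₀ r
      rw [h1] at hs
      rcases div_pos_iff.mp hs with ⟨_, h⟩ | ⟨h, _⟩
      · exfalso; have : r < r₀ := hr.2; linarith
      · exact h
    rw [hgr₀] at hdiff
    exact absurd (hgpos r hr.1.le hr.2) (by linarith)
  -- Step A : deriv v < 0 on (0,∞)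
  have hA : ∀ R, 0 < R → deriv v R < 0 := by
    intro R hR
    set F : ℝ → ℝ := fun r => r ^ (n - 1) * p r with hF
    have hFc : ContinuousOn F (Set.Icc 0 R) := by
      apply ContinuousOn.mul (continuous_pow (n - 1)).continuousOn
      apply ContinuousOn.mul _ hcv2.continuousOn
      apply ContinuousOn.mul continuousOn_const
      exact ContinuousOn.rpow_const hdv.continuous.continuousOn
        (fun x hx => Or.inl (ne_of_gt (hpos x hx.1)))
    have hFd : ∀ x ∈ interior (Set.Icc 0 R), deriv F x < 0 := by
      rw [interior_Icc]
      intro x hx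
      have hxpos : 0 < x := hx.1
      have hxv := hpos x hxpos.le
      have h1 : HasDerivAt (fun r : ℝ => r ^ (n - 1)) (((n:ℝ) - 1) * x ^ (n - 2)) x := by
        have := hasDerivAt_pow (n - 1) x
        have hc : (((n - 1 : ℕ)) : ℝ) = (n:ℝ) - 1 := by
          have : (1:ℕ) ≤ n := by omega
          push_cast [Nat.cast_sub this]; ring
      
        simpa [hc, show n - 1 - 1 = n - 2 by omega] using this
      have h2 : HasDerivAt F (((n:ℝ) - 1) * x ^ (n - 2) * p x + x ^ (n - 1) * P x) x :=
        h1.mul (hp' x hxv)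
      rw [h2.deriv]
      have hgx := hB x hxpos
      have hsum : P x + (((n:ℝ) - 1) / x) * p x = -(m / ((n:ℝ) - 1)) * g x := by
        have h := hode' x hxpos
        have hmne : m ≠ 0 := ne_of_gt hm
        have hnne : (n:ℝ) - 1 ≠ 0 := ne_of_gt hn1
        have h3 : ((n:ℝ) - 1) / m * (P x + (((n:ℝ) - 1) / x) * p x)
            = -(α * v x + β * x * deriv v x) := by linarith
        calc P x + (((n:ℝ) - 1) / x) * p x
            = (m / ((n:ℝ) - 1)) * (((n:ℝ) - 1) / m * (P x + (((n:ℝ) - 1) / x) * p x)) := by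
              field_simp
          _ = -(m / ((n:ℝ) - 1)) * g x := by rw [h3, hg]; ring
      have hx1 : (x:ℝ) ^ (n - 1) = x ^ (n - 2) * x := by
        rw [← pow_succ]; congr 1; omega
      have heq : ((n:ℝ) - 1) * x ^ (n - 2) * p x + x ^ (n - 1) * P x =
          x ^ (n - 1) * (P x + (((n:ℝ) - 1) / x) * p x) := by
        rw [hx1]
        have hxne : x ≠ 0 := ne_of_gt hxpos
        field_simp
        ring
      rw [heq, hsum]
      apply mul_neg_of_pos_of_neg (pow_pos hxpos _)
      have hpos2 : 0 < m / ((n:ℝ) - 1) * g x := mul_pos (div_pos hm hn1) hgx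
      nlinarith [hpos2]
    have hanti : StrictAntiOn F (Set.Icc 0 R) :=
      strictAntiOn_of_deriv_neg (convex_Icc 0 R) hFc hFd
    have hlt := hanti (Set.left_mem_Icc.mpr hR.le) (Set.right_mem_Icc.mpr hR.le) hR
    have hF0 : F 0 = 0 := by
      simp [hF, zero_pow (show n - 1 ≠ 0 by omega)]
    rw [hF0] at hlt
    have hRc : 0 < R ^ (n - 1) * (m * v R ^ (m - 1)) := by
      have := Real.rpow_pos_of_pos (hpos R hR.le) (m - 1)
      positivity
    have hFR : F R = R ^ (n - 1) * (m * v R ^ (m - 1)) * deriv v R := by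
      simp [hF, hp]; ring
    rw [hFR] at hlt
    by_contra hge
    push_neg at hge
    nlinarith
  -- assemble the conclusion
  intro r hr
  have hgr := hB r hr
  have hv' := hA r hr
  have hvr := hpos r hr.le
  have hgg : 0 < α * v r + β * r * deriv v r := hgr
  refine ⟨?_, ?_, ?_⟩
  · have h1 : m * α < ((n:ℝ) - 2) * β := by rw [div_lt_iff₀ hβ] at hαβ; linarith
    have h2 : α / β < ((n:ℝ) - 2) / m := by
      rw [div_lt_div_iff₀ hβ hm]; nlinarith
    linarith
  · rw [show -(α / β) = (-α) / β by ring, div_lt_div_iff₀ hβ hvr]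
    nlinarith
  · apply div_neg_of_neg_of_pos _ hvr
    nlinarith
end

section
/- Let v be a solution of the radial ODE ((n-1)/m)((v^m)'' + ((n-1)/r)(v^m)') + αv + βrv' = 0 on (0,∞), v > 0, with v(0) = η > 0, v'(0) = 0. Suppose there exists C₁ > 0 with r² v(r)^(1-m) ≤ C₁ for r ≥ 1. Then for all r > 0: ((n-1)/m) v(r)^m = β ∫_r^∞ s v(s) ds + (α - nβ) ∫_r^∞ s^(1-n) (∫₀^s z^(n-1) v(z) dz) ds, with both integrals convergent. -/
open Filter Topology MeasureTheory Set

lemma aux_integrable {f : ℝ → ℝ} {r C q : ℝ} (hr : 0 < r) (hq : q < -1)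
    (hf : ContinuousOn f (Ioi 0)) (hbound : ∀ s : ℝ, 1 ≤ s → |f s| ≤ C * s ^ q) :
    IntegrableOn f (Ioi r) := by
  have hM : r ≤ max r 1 := le_max_left r 1
  have hM0 : (0:ℝ) < max r 1 := lt_of_lt_of_le hr hM
  rw [← Set.Ioc_union_Ioi_eq_Ioi hM]
  apply IntegrableOn.union
  · exact (hf.mono (fun x hx => lt_of_lt_of_le hr hx.1)).integrableOn_Icc.mono_set
      Set.Ioc_subset_Icc_self
  · apply Integrable.mono' ((integrableOn_Ioi_rpow_of_lt hq hM0).const_mul C)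
    · exact (hf.mono (fun x hx => lt_trans hM0 hx)).aestronglyMeasurable measurableSet_Ioi
    · filter_upwards [ae_restrict_mem measurableSet_Ioi] with s hs
      exact hbound s (le_trans (le_max_right r 1) (le_of_lt hs))

set_option maxHeartbeats 1000000 in
theorem stmt_7 (n : ℕ) (hn : 3 ≤ n) (m ρ α β η : ℝ)
    (hm : 0 < m) (hm2 : m < ((n : ℝ) - 2) / n) (hρ : 0 < ρ)
    (hα : α = (2 * β + ρ) / (1 - m)) (hη : 0 < η)
    (v : ℝ → ℝ) (hv : ContDiff ℝ 2 v) (hpos : ∀ r, 0 ≤ r → 0 < v r)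
    (hode : ∀ r, 0 < r →
      ((n : ℝ) - 1) / m * (deriv (deriv (fun s => v s ^ m)) r
        + (((n : ℝ) - 1) / r) * deriv (fun s => v s ^ m) r)
      + α * v r + β * r * deriv v r = 0)
    (hv0 : v 0 = η) (hv0d : deriv v 0 = 0)
    (C₁ : ℝ) (hC₁ : 0 < C₁) (hw : ∀ r, 1 ≤ r → r ^ 2 * v r ^ (1 - m) ≤ C₁) :
    ∀ r, 0 < r →
      IntegrableOn (fun s => s * v s) (Set.Ioi r) ∧
      IntegrableOn (fun s => s ^ ((1 : ℝ) - n) * ∫ z in (0 : ℝ)..s, z ^ (n - 1) * v z)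
        (Set.Ioi r) ∧
      ((n : ℝ) - 1) / m * v r ^ m =
        β * (∫ s in Set.Ioi r, s * v s)
        + (α - n * β) *
          ∫ s in Set.Ioi r, s ^ ((1 : ℝ) - n) * ∫ z in (0 : ℝ)..s, z ^ (n - 1) * v z := by
  -- basic numeric facts
  have hn3 : (3:ℝ) ≤ (n:ℝ) := by exact_mod_cast hn
  have hnpos : (0:ℝ) < n := by linarith
  have hm1 : m < 1 := lt_of_lt_of_le hm2 (by rw [div_le_one hnpos]; linarith)
  have h1m : 0 < 1 - m := by linarith
  have hmn : m * n < n - 2 := (lt_div_iff₀ hnpos).mp hm2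
  set p : ℝ := 2 / (1 - m) with hp
  have hp2 : 2 < p := by rw [hp, lt_div_iff₀ h1m]; nlinarith
  have hp0 : 0 < p := by linarith
  have hpn : p < n := by rw [hp, div_lt_iff₀ h1m]; nlinarith
  set C₂ : ℝ := C₁ ^ (1 / (1 - m)) with hC2def
  have hC₂ : 0 < C₂ := Real.rpow_pos_of_pos hC₁ _
  -- decay of v
  have hdecay : ∀ s : ℝ, 1 ≤ s → v s ≤ C₂ * s ^ (-p) := by
    intro s hs
    have hs0 : (0:ℝ) < s := lt_of_lt_of_le one_pos hs
    have hv0' : (0:ℝ) < v s := hpos s hs0.le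
    have h1 : v s ^ (1 - m) ≤ C₁ / s ^ 2 := by
      rw [le_div_iff₀ (by positivity)]
      have := hw s hs
      nlinarith [this]
    have h2 : v s = (v s ^ (1 - m)) ^ (1 / (1 - m)) := by
      rw [← Real.rpow_mul hv0'.le, mul_one_div, div_self h1m.ne', Real.rpow_one]
    rw [h2]
    have h3 : (v s ^ (1 - m)) ^ (1 / (1 - m)) ≤ (C₁ / s ^ 2) ^ (1 / (1 - m)) :=
      Real.rpow_le_rpow (Real.rpow_nonneg hv0'.le _) h1 (by positivity)
    refine h3.trans_eq ?_
    have h4 : ((s:ℝ) ^ 2) ^ (1 / (1 - m)) = s ^ p := by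
      rw [← Real.rpow_natCast s 2, ← Real.rpow_mul hs0.le, hp]
      congr 1
      push_cast
      ring
    rw [Real.div_rpow hC₁.le (by positivity), h4, Real.rpow_neg hs0.le, div_eq_mul_inv, hC2def]
  -- positivity region
  have hvpos : ∀ s : ℝ, 0 ≤ s → 0 < v s := hpos
  set U : Set ℝ := v ⁻¹' Set.Ioi 0 with hUdef
  have hU : IsOpen U := isOpen_Ioi.preimage hv.continuous
  have hsubU : ∀ x : ℝ, 0 ≤ x → x ∈ U := fun x hx => hpos x hx
  set w : ℝ → ℝ := fun s => v s ^ m with hwdef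
  have hwC : ContDiffOn ℝ 2 w U := fun x hx =>
    ((hv.contDiffAt).rpow_const_of_ne (ne_of_gt hx)).contDiffWithinAt
  set W : ℝ → ℝ := deriv w with hWdef
  have hWC : ContDiffOn ℝ 1 W U :=
    hwC.deriv_of_isOpen hU (by norm_num : (1:WithTop ℕ∞) + 1 ≤ 2)
  have hW_diff : ∀ x ∈ U, DifferentiableAt ℝ W x := fun x hx =>
    (hWC.differentiableOn one_ne_zero).differentiableAt (hU.mem_nhds hx)
  have hW_cont : ContinuousOn W U := hWC.continuousOn
  have hw_deriv : ∀ x ∈ U, HasDerivAt w (W x) x := fun x hx =>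
    ((hwC.differentiableOn (by norm_num)).differentiableAt (hU.mem_nhds hx)).hasDerivAt
  have hvd : ∀ x : ℝ, HasDerivAt v (deriv v x) x := fun x =>
    ((hv.differentiable (by norm_num)) x).hasDerivAt
  -- G and its properties
  set G : ℝ → ℝ := fun s => ∫ z in (0:ℝ)..s, z ^ (n - 1) * v z with hGdef
  have hGic : Continuous (fun z : ℝ => z ^ (n - 1) * v z) := (continuous_pow _).mul hv.continuous
  have hGd : ∀ x : ℝ, HasDerivAt G (x ^ (n - 1) * v x) x := by
    intro x
    exact intervalIntegral.integral_hasDerivAt_right (hGic.intervalIntegrable _ _)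
      (hGic.stronglyMeasurable.stronglyMeasurableAtFilter) hGic.continuousAt
  have hGcont : Continuous G := by
    have : Differentiable ℝ G := fun x => (hGd x).differentiableAt
    exact this.continuous
  have hGnonneg : ∀ s : ℝ, 0 ≤ s → 0 ≤ G s := by
    intro s hs
    apply intervalIntegral.integral_nonneg hs
    intro z hz
    have hz0 : (0:ℝ) ≤ z := hz.1
    have hvz : (0:ℝ) ≤ v z := (hpos z hz.1).le
    positivity
  set C₃ : ℝ := G 1 + C₂ / ((n:ℝ) - p) with hC3def
  have hzpow : ∀ z : ℝ, 0 < z → (z ^ (n - 1) : ℝ) = z ^ ((n:ℝ) - 1) := by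
    intro z hz
    rw [← Real.rpow_natCast z (n - 1), Nat.cast_sub (by omega : 1 ≤ n), Nat.cast_one]
  have hGbound : ∀ s : ℝ, 1 ≤ s → G s ≤ C₃ * s ^ ((n:ℝ) - p) := by
    intro s hs
    have hs0 : (0:ℝ) < s := lt_of_lt_of_le one_pos hs
    have hnp : (0:ℝ) < (n:ℝ) - p := by linarith
    have hq : (-1:ℝ) < (n:ℝ) - 1 - p := by linarith
    have hsplit : G s = G 1 + ∫ z in (1:ℝ)..s, z ^ (n - 1) * v z := by
      simp only [hGdef]
      rw [← intervalIntegral.integral_add_adjacent_intervals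
        (hGic.intervalIntegrable 0 1) (hGic.intervalIntegrable 1 s)]
    have hmaj : ContinuousOn (fun z : ℝ => C₂ * z ^ ((n:ℝ) - 1 - p)) (Set.uIcc 1 s) := by
      rw [Set.uIcc_of_le hs]
      intro z hz
      exact (continuousAt_const.mul
        (Real.continuousAt_rpow_const z _ (Or.inl (ne_of_gt (lt_of_lt_of_le one_pos hz.1))))).continuousWithinAt
    have hbd : (∫ z in (1:ℝ)..s, z ^ (n - 1) * v z)
        ≤ ∫ z in (1:ℝ)..s, C₂ * z ^ ((n:ℝ) - 1 - p) := by
      apply intervalIntegral.integral_mono_on hs (hGic.intervalIntegrable 1 s)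
        (hmaj.intervalIntegrable)
      intro z hz
      have hz1 : (1:ℝ) ≤ z := hz.1
      have hz0 : (0:ℝ) < z := lt_of_lt_of_le one_pos hz1
      calc z ^ (n - 1) * v z ≤ z ^ (n - 1) * (C₂ * z ^ (-p)) :=
            mul_le_mul_of_nonneg_left (hdecay z hz1) (by positivity)
        _ = C₂ * z ^ ((n:ℝ) - 1 - p) := by
            rw [hzpow z hz0, show z ^ ((n:ℝ) - 1) * (C₂ * z ^ (-p))
              = C₂ * (z ^ ((n:ℝ) - 1) * z ^ (-p)) by ring, ← Real.rpow_add hz0,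
              show (n:ℝ) - 1 + -p = (n:ℝ) - 1 - p by ring]
    have hval : (∫ z in (1:ℝ)..s, C₂ * z ^ ((n:ℝ) - 1 - p))
        = C₂ * ((s ^ ((n:ℝ) - p) - 1) / ((n:ℝ) - p)) := by
      rw [intervalIntegral.integral_const_mul, integral_rpow (Or.inl hq),
        show (n:ℝ) - 1 - p + 1 = (n:ℝ) - p by ring, Real.one_rpow]
    have hs1 : (1:ℝ) ≤ s ^ ((n:ℝ) - p) := by
      calc (1:ℝ) = 1 ^ ((n:ℝ) - p) := (Real.one_rpow _).symm
        _ ≤ s ^ ((n:ℝ) - p) := Real.rpow_le_rpow zero_le_one hs hnp.le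
    have hG1 : 0 ≤ G 1 := hGnonneg 1 zero_le_one
    have hB : (0:ℝ) ≤ C₂ / ((n:ℝ) - p) := by positivity
    have hrw : C₂ * ((s ^ ((n:ℝ) - p) - 1) / ((n:ℝ) - p))
        = C₂ / ((n:ℝ) - p) * (s ^ ((n:ℝ) - p) - 1) := by ring
    rw [hval, hrw] at hbd
    rw [hsplit, hC3def]
    nlinarith [hbd, hs1, hG1, hB, mul_nonneg hG1 (by linarith : (0:ℝ) ≤ s ^ ((n:ℝ) - p) - 1)]
  -- constants
  set c : ℝ := m / ((n:ℝ) - 1) with hcdef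
  have hn1 : ((n:ℝ) - 1) ≠ 0 := by linarith
  -- the conserved quantity
  set Φ : ℝ → ℝ := fun x => x ^ (n - 1) * W x + c * β * (x ^ n * v x)
    + c * (α - n * β) * G x with hΦdef
  have hΦd : ∀ x : ℝ, 0 ≤ x → HasDerivAt Φ 0 x := by
    intro x hx
    have hxU : x ∈ U := hsubU x hx
    have hW' : HasDerivAt W (deriv W x) x := (hW_diff x hxU).hasDerivAt
    have h1 : HasDerivAt (fun y : ℝ => y ^ (n - 1) * W y)
        ((↑(n - 1) * x ^ (n - 1 - 1)) * W x + x ^ (n - 1) * deriv W x) x :=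
      (hasDerivAt_pow (n - 1) x).mul hW'
    have h2 : HasDerivAt (fun y : ℝ => y ^ n * v y)
        ((↑n * x ^ (n - 1)) * v x + x ^ n * deriv v x) x :=
      (hasDerivAt_pow n x).mul (hvd x)
    have h3 := hGd x
    have h4 := (h1.add ((h2.const_mul (c * β)).add (h3.const_mul (c * (α - n * β)))))
    have h5 : HasDerivAt Φ
        (((↑(n - 1) * x ^ (n - 1 - 1)) * W x + x ^ (n - 1) * deriv W x)
          + (c * β * ((↑n * x ^ (n - 1)) * v x + x ^ n * deriv v x)
          + c * (α - n * β) * (x ^ (n - 1) * v x))) x := by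
      refine h4.congr_of_eventuallyEq (Filter.Eventually.of_forall fun y => ?_)
      simp only [hΦdef, Pi.add_apply]
      ring
    convert h5 using 1
    obtain ⟨k, rfl⟩ : ∃ k, n = k + 3 := ⟨n - 3, by omega⟩
    rcases hx.eq_or_lt with h0 | hx0
    · subst h0  -- x = 0? hx.eq_or_lt : 0 = x ∨ 0 < x
      norm_num
    · have he := hode x hx0
      have hm' : m ≠ 0 := hm.ne'
      have hx' : x ≠ 0 := hx0.ne'
      have key3 : ((k:ℝ) + 2) * (x * deriv W x + ((k:ℝ) + 2) * W x)
          + m * (α * x * v x + β * x ^ 2 * deriv v x) = 0 := by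
        have hk1 : ((k:ℝ) + 3) - 1 = (k:ℝ) + 2 := by ring
        push_cast at he
        field_simp at he
        linear_combination he
      have hk2' : ((k:ℝ) + 2) ≠ 0 := by positivity
      have hcmul : c * ((k:ℝ) + 2) = m := by
        rw [hcdef]
        push_cast
        rw [show ((k:ℝ) + 3 - 1) = (k:ℝ) + 2 by ring]
        field_simp
      refine mul_left_cancel₀ hk2' ?_
      push_cast
      linear_combination (-(x ^ (k + 1))) * key3
        - (x ^ (k + 1) * (α * x * v x + β * x ^ 2 * deriv v x)) * hcmul
  have hΦ0 : Φ 0 = 0 := by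
    have h1 : (0:ℝ) ^ (n - 1) = 0 := zero_pow (by omega)
    have h2 : (0:ℝ) ^ n = 0 := zero_pow (by omega)
    simp [hΦdef, hGdef, h1, h2]
  have hΦ : ∀ x : ℝ, 0 ≤ x → Φ x = 0 := by
    intro x hx
    have hcont : ContinuousOn Φ (Icc 0 x) := fun y hy =>
      ((hΦd y hy.1).differentiableAt.continuousAt).continuousWithinAt
    have := constant_of_has_deriv_right_zero hcont
      (fun y hy => (hΦd y hy.1).hasDerivWithinAt) x ⟨hx, le_rfl⟩
    rw [this, hΦ0]
  -- formula for W on (0,∞)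
  have hWeq : ∀ x : ℝ, 0 < x →
      W x = -(c * β) * (x * v x) - c * (α - n * β) * (x ^ ((1:ℝ) - n) * G x) := by
    intro x hx
    have hΦx := hΦ x hx.le
    simp only [hΦdef] at hΦx
    have hxn : (x:ℝ) ^ (n - 1) ≠ 0 := pow_ne_zero _ hx.ne'
    have hpow : x ^ ((1:ℝ) - n) = ((x:ℝ) ^ (n - 1))⁻¹ := by
      rw [← Real.rpow_natCast x (n - 1), ← Real.rpow_neg hx.le]
      congr 1
      rw [Nat.cast_sub (by omega : 1 ≤ n), Nat.cast_one]
      ring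
    rw [hpow]
    have hx1 : ((x:ℝ) ^ (n - 1))⁻¹ * (x ^ (n - 1)) = 1 := inv_mul_cancel₀ hxn
    obtain ⟨k, rfl⟩ : ∃ k, n = k + 3 := ⟨n - 3, by omega⟩
    have e1 : k + 3 - 1 = k + 2 := rfl
    rw [e1] at hΦx hx1 ⊢
    linear_combination ((x ^ (k + 2) : ℝ)⁻¹) * hΦx - (W x + c * β * (x * v x)) * hx1
  intro r hr
  -- integrability
  have hI₁ : IntegrableOn (fun s => s * v s) (Set.Ioi r) := by
    apply aux_integrable hr (q := 1 - p) (C := C₂) (by linarith)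
    · exact (continuous_id.mul hv.continuous).continuousOn
    · intro s hs
      have hs0 : (0:ℝ) < s := lt_of_lt_of_le one_pos hs
      have h1 : |s * v s| = s * v s := abs_of_nonneg (mul_nonneg hs0.le (hpos s hs0.le).le)
      rw [h1]
      calc s * v s ≤ s * (C₂ * s ^ (-p)) := by
            exact mul_le_mul_of_nonneg_left (hdecay s hs) hs0.le
        _ = C₂ * s ^ (1 - p) := by
            rw [show (1:ℝ) - p = 1 + (-p) by ring, Real.rpow_add hs0, Real.rpow_one]
            ring
  have hI₂ : IntegrableOn
      (fun s => s ^ ((1 : ℝ) - n) * ∫ z in (0 : ℝ)..s, z ^ (n - 1) * v z) (Set.Ioi r) := by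
    apply aux_integrable hr (q := 1 - p) (C := C₃) (by linarith)
    · apply ContinuousOn.mul _ hGcont.continuousOn
      exact fun s hs => (Real.continuousAt_rpow_const s _ (Or.inl (ne_of_gt hs))).continuousWithinAt
    · intro s hs
      have hs0 : (0:ℝ) < s := lt_of_lt_of_le one_pos hs
      have hGs : (0:ℝ) ≤ G s := hGnonneg s hs0.le
      have h1 : |s ^ ((1 : ℝ) - n) * G s| = s ^ ((1 : ℝ) - n) * G s := by
        apply abs_of_nonneg
        have := Real.rpow_nonneg hs0.le ((1:ℝ) - n)
        positivity
      rw [show |s ^ ((1 : ℝ) - n) * ∫ z in (0 : ℝ)..s, z ^ (n - 1) * v z|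
          = |s ^ ((1 : ℝ) - n) * G s| from rfl, h1]
      calc s ^ ((1 : ℝ) - n) * G s ≤ s ^ ((1 : ℝ) - n) * (C₃ * s ^ ((n:ℝ) - p)) :=
            mul_le_mul_of_nonneg_left (hGbound s hs) (Real.rpow_nonneg hs0.le _)
        _ = C₃ * s ^ (1 - p) := by
            rw [show s ^ ((1:ℝ) - n) * (C₃ * s ^ ((n:ℝ) - p))
              = C₃ * (s ^ ((1:ℝ) - n) * s ^ ((n:ℝ) - p)) by ring, ← Real.rpow_add hs0,
              show (1:ℝ) - n + ((n:ℝ) - p) = 1 - p by ring]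
  refine ⟨hI₁, hI₂, ?_⟩
  -- limits
  have hwto : Tendsto (fun R => v R ^ m) atTop (𝓝 0) := by
    have h1 : Tendsto v atTop (𝓝 0) := by
      have hub : ∀ᶠ R in atTop, v R ≤ C₂ * R ^ (-p) :=
        eventually_atTop.2 ⟨1, fun R hR => hdecay R hR⟩
      have hlb : ∀ᶠ R in atTop, 0 ≤ v R :=
        eventually_atTop.2 ⟨0, fun R hR => (hpos R hR).le⟩
      have h2 : Tendsto (fun R : ℝ => C₂ * R ^ (-p)) atTop (𝓝 0) := by
        simpa using (tendsto_rpow_neg_atTop hp0).const_mul C₂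
      exact squeeze_zero' hlb hub h2
    have h3 : ContinuousAt (fun y : ℝ => y ^ m) 0 :=
      Real.continuousAt_rpow_const 0 m (Or.inr hm.le)
    have h4 := h3.tendsto.comp h1
    rw [Real.zero_rpow hm.ne'] at h4
    exact h4
  have hL : Tendsto (fun R => w R - w r) atTop (𝓝 (0 - w r)) :=
    hwto.sub_const (w r)
  have hlim1 := MeasureTheory.intervalIntegral_tendsto_integral_Ioi r hI₁ tendsto_id
  have hlim2 := MeasureTheory.intervalIntegral_tendsto_integral_Ioi r hI₂ tendsto_id
  have hkey : ∀ᶠ R in atTop, w R - w r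
      = (-(c * β)) * (∫ s in r..R, s * v s)
        + (-(c * (α - n * β)))
          * (∫ s in r..R, s ^ ((1:ℝ) - n) * ∫ z in (0:ℝ)..s, z ^ (n - 1) * v z) := by
    filter_upwards [eventually_ge_atTop r] with R hR
    have hsub : Set.uIcc r R ⊆ U := by
      rw [Set.uIcc_of_le hR]
      exact fun x hx => hsubU x (le_trans hr.le hx.1)
    have hftc : ∫ s in r..R, W s = w R - w r :=
      intervalIntegral.integral_eq_sub_of_hasDerivAt (fun x hx => hw_deriv x (hsub hx))
        ((hW_cont.mono hsub).intervalIntegrable)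
    rw [← hftc]
    have hcongr : ∫ s in r..R, W s = ∫ s in r..R,
        ((-(c * β)) * (s * v s)
          + (-(c * (α - n * β))) * (s ^ ((1:ℝ) - n) * ∫ z in (0:ℝ)..s, z ^ (n - 1) * v z)) := by
      apply intervalIntegral.integral_congr
      intro s hs
      have hs0 : 0 < s := lt_of_lt_of_le hr ((Set.uIcc_of_le hR ▸ hs).1)
      rw [hWeq s hs0]
      simp only [hGdef]
      ring
    rw [hcongr]
    have hi1 : IntervalIntegrable (fun s => s * v s) volume r R :=
      (continuous_id.mul hv.continuous).intervalIntegrable r R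
    have hi2 : IntervalIntegrable
        (fun s => s ^ ((1:ℝ) - n) * ∫ z in (0:ℝ)..s, z ^ (n - 1) * v z) volume r R := by
      apply ContinuousOn.intervalIntegrable
      intro s hs
      have hs0 : 0 < s := lt_of_lt_of_le hr ((Set.uIcc_of_le hR ▸ hs).1)
      exact ((Real.continuousAt_rpow_const s _ (Or.inl hs0.ne')).mul
        hGcont.continuousAt).continuousWithinAt
    rw [intervalIntegral.integral_add (hi1.const_mul _) (hi2.const_mul _),
      intervalIntegral.integral_const_mul, intervalIntegral.integral_const_mul]
  have hRt : Tendsto (fun R => (-(c * β)) * (∫ s in r..R, s * v s)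
        + (-(c * (α - n * β)))
          * (∫ s in r..R, s ^ ((1:ℝ) - n) * ∫ z in (0:ℝ)..s, z ^ (n - 1) * v z)) atTop
      (𝓝 ((-(c * β)) * (∫ s in Set.Ioi r, s * v s)
        + (-(c * (α - n * β)))
          * (∫ s in Set.Ioi r, s ^ ((1:ℝ) - n) * ∫ z in (0:ℝ)..s, z ^ (n - 1) * v z))) :=
    (hlim1.const_mul _).add (hlim2.const_mul _)
  have heq := tendsto_nhds_unique (hL.congr' hkey) hRt
  show ((n : ℝ) - 1) / m * w r = _
  rw [hcdef] at heq
  field_simp at heq ⊢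
  refine mul_left_cancel₀ hn1 ?_
  linear_combination -((n:ℝ) - 1) * heq
end

section
/- Let v be a solution of the radial ODE ((n-1)/m)((v^m)'' + ((n-1)/r)(v^m)') + αv + βrv' = 0 on (0,∞), v > 0, with v(0) = η > 0, v'(0) = 0, where 0 < α ≤ nβ and β > mρ/(n-2-mn). Then there exists C₁ > 0 such that r² v(r)^(1-m) ≤ C₁ for all r ≥ 1. -/
open Filter Topology MeasureTheory Set

/-- A sublevel set of a function continuous on a closed set is closed. -/
lemma aux_closed_le {s : Set ℝ} (hs : IsClosed s) {f : ℝ → ℝ}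
    (hf : ∀ x ∈ s, ContinuousAt f x) (K : ℝ) : IsClosed {x | x ∈ s ∧ f x ≤ K} := by
  rw [← closure_subset_iff_isClosed]
  intro x hx
  obtain ⟨u, hu, hux⟩ := mem_closure_iff_seq_limit.mp hx
  have hxs : x ∈ s := hs.closure_subset
    (mem_closure_of_tendsto hux (Eventually.of_forall fun n => (hu n).1))
  refine ⟨hxs, ?_⟩
  have ht : Tendsto (f ∘ u) atTop (𝓝 (f x)) := ((hf x hxs).tendsto).comp hux
  exact le_of_tendsto ht (Eventually.of_forall fun n => (hu n).2)

lemma aux_closed_ge {s : Set ℝ} (hs : IsClosed s) {f : ℝ → ℝ}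
    (hf : ∀ x ∈ s, ContinuousAt f x) (K : ℝ) : IsClosed {x | x ∈ s ∧ K ≤ f x} := by
  have := aux_closed_le hs (f := fun x => -f x)
    (fun x hx => (hf x hx).neg) (-K)
  convert this using 1
  ext x; simp only [mem_setOf_eq, neg_le_neg_iff]

/-- If the derivative is negative, the function is eventually smaller just to the right. -/
lemma aux_ev_lt {f : ℝ → ℝ} {x d : ℝ} (hf : HasDerivAt f d x) (hd : d < 0) :
    ∀ᶠ t in 𝓝[>] x, f t < f x := by
  have h1 : Tendsto (slope f x) (𝓝[>] x) (𝓝 d) :=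
    (hasDerivAt_iff_tendsto_slope.mp hf).mono_left
      (nhdsWithin_mono x (fun y hy => ne_of_gt (α := ℝ) hy))
  have h2 : ∀ᶠ t in 𝓝[>] x, slope f x t < 0 := h1.eventually_lt_const hd
  filter_upwards [h2, self_mem_nhdsWithin] with t ht hxt
  rw [slope_def_field] at ht
  have h3 : (0:ℝ) < t - x := sub_pos.mpr hxt
  have := mul_neg_of_neg_of_pos ht h3
  rw [div_mul_cancel₀ _ (ne_of_gt h3)] at this
  linarith

lemma aux_ev_gt {f : ℝ → ℝ} {x d : ℝ} (hf : HasDerivAt f d x) (hd : 0 < d) :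
    ∀ᶠ t in 𝓝[>] x, f x < f t := by
  have h1 : Tendsto (slope f x) (𝓝[>] x) (𝓝 d) :=
    (hasDerivAt_iff_tendsto_slope.mp hf).mono_left
      (nhdsWithin_mono x (fun y hy => ne_of_gt (α := ℝ) hy))
  have h2 : ∀ᶠ t in 𝓝[>] x, 0 < slope f x t := h1.eventually_const_lt hd
  filter_upwards [h2, self_mem_nhdsWithin] with t ht hxt
  rw [slope_def_field] at ht
  have h3 : (0:ℝ) < t - x := sub_pos.mpr hxt
  have := mul_pos ht h3
  rw [div_mul_cancel₀ _ (ne_of_gt h3)] at this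
  linarith

set_option maxHeartbeats 1000000 in
theorem stmt_15 (n : ℕ) (hn : 3 ≤ n) (m ρ α β η : ℝ)
    (hm : 0 < m) (hm2 : m < ((n : ℝ) - 2) / n) (hρ : 0 < ρ)
    (hα : α = (2 * β + ρ) / (1 - m)) (hη : 0 < η)
    (v : ℝ → ℝ) (hv : ContDiff ℝ 2 v) (hpos : ∀ r, 0 ≤ r → 0 < v r)
    (hode : ∀ r, 0 < r →
      ((n : ℝ) - 1) / m * (deriv (deriv (fun s => v s ^ m)) r
        + (((n : ℝ) - 1) / r) * deriv (fun s => v s ^ m) r)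
      + α * v r + β * r * deriv v r = 0)
    (hv0 : v 0 = η) (hv0d : deriv v 0 = 0)
    (hβ : β > m * ρ / ((n : ℝ) - 2 - m * n)) (hα0 : 0 < α) (hαβ : α ≤ n * β) :
    ∃ C₁ > 0, ∀ r, 1 ≤ r → r ^ 2 * v r ^ (1 - m) ≤ C₁ := by
  have hN3 : (3:ℝ) ≤ (n:ℝ) := by exact_mod_cast hn
  have hN1 : (0:ℝ) < (n:ℝ) - 1 := by linarith
  have hN2 : (0:ℝ) < (n:ℝ) - 2 := by linarith
  have hNn : (0:ℝ) < (n:ℝ) := by linarith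
  have hmn : m * (n:ℝ) < (n:ℝ) - 2 := by
    have h := mul_lt_mul_of_pos_right hm2 hNn
    rw [div_mul_cancel₀ ((n:ℝ)-2) (ne_of_gt hNn)] at h
    linarith
  have hm1 : m < 1 := by nlinarith
  have h1m : 0 < 1 - m := by linarith
  have hβ0 : 0 < β := lt_trans (div_pos (mul_pos hm hρ) (by linarith)) hβ
  -- constants
  set u₁ : ℝ := 2*((n:ℝ)-1)/(1-m) + ((n:ℝ)-1)*ρ/(2*β*(1-m)) with hu₁def
  set ε₁ : ℝ := ρ/(2*(1-m)) with hε₁def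
  have hε₁0 : 0 < ε₁ := by positivity
  have hu₁0 : 0 < u₁ := by positivity
  have hkey : α - β * u₁ / ((n:ℝ)-1) = ε₁ := by
    rw [hα, hu₁def, hε₁def]
    field_simp
    ring
  have hu₁2 : 2*((n:ℝ)-1) < (1-m)*u₁ := by
    rw [hu₁def]
    have : (1-m) * (2*((n:ℝ)-1)/(1-m)) = 2*((n:ℝ)-1) := by field_simp
    have h2 : 0 < (1-m) * (((n:ℝ)-1)*ρ/(2*β*(1-m))) := by positivity
    nlinarith
  set X₂ : ℝ := 4*((n:ℝ)-2)*u₁/ε₁ with hX₂def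
  have hX₂0 : 0 < X₂ := by positivity
  set c : ℝ := 8/(3*ε₁) with hcdef
  have hc0 : 0 < c := by positivity
  have hcε : c * ε₁ = 8/3 := by rw [hcdef]; field_simp
  have hcX : c * (((n:ℝ)-2)*u₁) = (2/3) * X₂ := by rw [hcdef, hX₂def]; field_simp; ring
  -- derivative infrastructure
  have hv11 : ContDiff ℝ (1+1 : ℕ) v := by exact_mod_cast hv
  have hvdiff : Differentiable ℝ v := hv11.differentiable (by norm_num)
  have hvc : Continuous v := hvdiff.continuous
  have hv1 : ContDiff ℝ 1 (deriv v) := by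
    have := (contDiff_succ_iff_deriv (n := 1)).mp (by exact_mod_cast hv)
    exact this.2.2
  have hv'c : Continuous (deriv v) := hv1.continuous
  have hv'diff : Differentiable ℝ (deriv v) := hv1.differentiable (by norm_num)
  have hvAt : ∀ r : ℝ, HasDerivAt v (deriv v r) r := fun r => (hvdiff r).hasDerivAt
  have hv'At : ∀ r : ℝ, HasDerivAt (deriv v) (deriv (deriv v) r) r := fun r => (hv'diff r).hasDerivAt
  -- rpow identities
  have er1 : ∀ r : ℝ, 0 < v r → v r ^ (m-1) = (v r ^ (1-m))⁻¹ := by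
    intro r h
    rw [show m-1 = -(1-m) by ring, Real.rpow_neg h.le]
  have er3 : ∀ r : ℝ, 0 < v r → v r ^ (1-m-1) = v r ^ (1-m) * (v r)⁻¹ := by
    intro r h
    rw [show (1-m-1 : ℝ) = (1-m) + (-1) by ring, Real.rpow_add h, Real.rpow_neg_one]
  have hRpos : ∀ r : ℝ, 0 < v r → 0 < v r ^ (1-m) := fun r h => Real.rpow_pos_of_pos h _
  -- derivative of v^m
  have hw1 : ∀ r : ℝ, 0 < v r → deriv (fun s => v s ^ m) r = m * ((v r ^ (1-m))⁻¹ * deriv v r) := by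
    intro r hvr
    have h := ((hvAt r).rpow_const (p := m) (Or.inl hvr.ne')).deriv
    rw [h, er1 r hvr]; ring
  have hwev : ∀ r : ℝ, 0 < v r →
      deriv (fun s => v s ^ m) =ᶠ[𝓝 r] fun s => m * ((v s ^ (1-m))⁻¹ * deriv v s) := by
    intro r hvr
    have hev : ∀ᶠ s in 𝓝 r, 0 < v s := hvc.continuousAt.eventually_const_lt hvr
    filter_upwards [hev] with s hs
    exact hw1 s hs
  have hw2 : ∀ r : ℝ, 0 < v r → deriv (deriv (fun s => v s ^ m)) r
      = m * ((m-1) * ((v r ^ (1-m))⁻¹ * (v r)⁻¹) * (deriv v r)^2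
          + (v r ^ (1-m))⁻¹ * deriv (deriv v) r) := by
    intro r hvr
    rw [(hwev r hvr).deriv_eq]
    have h1 : HasDerivAt (fun s => v s ^ (1-m)) (deriv v r * (1-m) * v r ^ (1-m-1)) r :=
      (hvAt r).rpow_const (Or.inl hvr.ne')
    have h2 : HasDerivAt (fun s => (v s ^ (1-m))⁻¹)
        (-(deriv v r * (1-m) * v r ^ (1-m-1)) / (v r ^ (1-m))^2) r :=
      h1.inv (hRpos r hvr).ne'
    have h3 : HasDerivAt (fun s => m * ((v s ^ (1-m))⁻¹ * deriv v s)) _ r := (h2.mul (hv'At r)).const_mul m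
    rw [h3.deriv, er3 r hvr]
    have hR := (hRpos r hvr).ne'
    field_simp
    ring
  -- the second-order ODE solved for v''
  have lemB : ∀ r : ℝ, 0 < r → deriv (deriv v) r =
      -((α * v r + β * r * deriv v r) * v r ^ (1-m)) / ((n:ℝ)-1)
      - (m-1) * (deriv v r)^2 / v r - ((n:ℝ)-1) * deriv v r / r := by
    intro r hr
    have hvr := hpos r hr.le
    have h := hode r hr
    rw [hw2 r hvr, hw1 r hvr] at h
    have hR := (hRpos r hvr).ne'
    have hv0' := hvr.ne'
    have hr0 := hr.ne'
    have hN1' := hN1.ne'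
    have hm' := hm.ne'
    field_simp at h ⊢
    have hE : m * (v r ^ (1-m))^2 *
        (((n:ℝ)-1) * ((m-1) * (deriv v r)^2 * r + deriv (deriv v) r * v r * r
            + ((n:ℝ)-1) * deriv v r * v r)
          + (α * v r + β * r * deriv v r) * v r * r * v r ^ (1-m)) = 0 := by
      linear_combination m * (v r ^ (1-m))^2 * h
    have hE0 : ((n:ℝ)-1) * ((m-1) * (deriv v r)^2 * r + deriv (deriv v) r * v r * r
            + ((n:ℝ)-1) * deriv v r * v r)
          + (α * v r + β * r * deriv v r) * v r * r * v r ^ (1-m) = 0 :=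
      (mul_eq_zero.mp hE).resolve_left (mul_pos hm (pow_pos (hRpos r hvr) 2)).ne'
    linear_combination hE0
  -- the main quantities
  set X : ℝ → ℝ := fun t => t ^ 2 * v t ^ (1 - m) with hXdef
  set U : ℝ → ℝ := fun t => -((n:ℝ)-1) * (t * deriv v t) / v t with hUdef
  have hXpos : ∀ r : ℝ, 0 < r → 0 < X r := fun r hr =>
    mul_pos (pow_pos hr 2) (hRpos r (hpos r hr.le))
  have hXd : ∀ r : ℝ, 0 < r →
      HasDerivAt X (X r * (2 - (1-m) * U r / ((n:ℝ)-1)) / r) r := by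
    intro r hr
    have hvr := hpos r hr.le
    have h1 : HasDerivAt (fun t => v t ^ (1-m)) (deriv v r * (1-m) * v r ^ (1-m-1)) r :=
      (hvAt r).rpow_const (Or.inl hvr.ne')
    have h2 := (hasDerivAt_pow 2 r).mul h1
    have hgoal : X r * (2 - (1-m) * U r / ((n:ℝ)-1)) / r
        = (↑(2:ℕ) * r ^ (2-1)) * v r ^ (1-m) + r ^ 2 * (deriv v r * (1-m) * v r ^ (1-m-1)) := by
      rw [er3 r hvr]
      simp only [hXdef, hUdef]
      field_simp
      ring
    rw [hgoal]
    exact h2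
  have hUd : ∀ r : ℝ, 0 < r →
      HasDerivAt U (((α - β * U r / ((n:ℝ)-1)) * X r - ((n:ℝ)-2) * U r
        + m * (U r)^2 / ((n:ℝ)-1)) / r) r := by
    intro r hr
    have hvr := hpos r hr.le
    have h1 : HasDerivAt (fun t => -((n:ℝ)-1) * (t * deriv v t))
        (-((n:ℝ)-1) * (1 * deriv v r + r * deriv (deriv v) r)) r :=
      ((hasDerivAt_id r).mul (hv'At r)).const_mul _
    have h2 := h1.div (hvAt r) hvr.ne'
    have hgoal : ((α - β * U r / ((n:ℝ)-1)) * X r - ((n:ℝ)-2) * U r + m * (U r)^2 / ((n:ℝ)-1)) / r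
        = (-((n:ℝ)-1) * (1 * deriv v r + r * deriv (deriv v) r) * v r
            - -((n:ℝ)-1) * (r * deriv v r) * deriv v r) / v r ^ 2 := by
      rw [lemB r hr]
      simp only [hXdef, hUdef]
      field_simp
      ring
    rw [hgoal]
    exact h2
  -- v is nonincreasing on [0,∞)
  have hvd0 : ∀ r : ℝ, 0 ≤ r → deriv v r ≤ 0 := by
    intro r₁ hr₁
    rcases eq_or_lt_of_le hr₁ with h0|h0
    · rw [← h0, hv0d]
    by_contra hcon
    push_neg at hcon
    set S : Set ℝ := {t | t ∈ Icc 0 r₁ ∧ deriv v t ≤ 0} with hSdef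
    have hS0 : (0:ℝ) ∈ S := ⟨⟨le_refl 0, h0.le⟩, le_of_eq hv0d⟩
    have hSclosed : IsClosed S := aux_closed_le isClosed_Icc (fun x _ => hv'c.continuousAt) 0
    have hSbdd : BddAbove S := ⟨r₁, fun t ht => ht.1.2⟩
    have haS : sSup S ∈ S := hSclosed.csSup_mem ⟨0, hS0⟩ hSbdd
    set a := sSup S with hadef
    have ha1 : a ≤ r₁ := haS.1.2
    have ha0 : 0 ≤ a := haS.1.1
    have halt : a < r₁ := lt_of_le_of_ne ha1 (fun he => by rw [he] at haS; linarith [haS.2])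
    have hgt : ∀ t, a < t → t ≤ r₁ → 0 < deriv v t := by
      intro t hat htr
      by_contra hc
      push_neg at hc
      exact absurd (le_csSup hSbdd ⟨⟨le_trans ha0 hat.le, htr⟩, hc⟩) (not_le.mpr hat)
    rcases eq_or_lt_of_le ha0 with ha0'|ha0'
    · -- a = 0 : deriv v > 0 on (0, r₁]; contradiction via the divergence identity
      have hgt0 : ∀ t, 0 < t → t ≤ r₁ → 0 < deriv v t := by
        intro t ht htr
        exact hgt t (by rw [← ha0']; exact ht) htr
      set hfun : ℝ → ℝ := fun t => t ^ (n-1) * ((v t ^ (1-m))⁻¹ * deriv v t) with hhdef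
      obtain ⟨k, hk⟩ : ∃ k, n - 1 = k + 1 := ⟨n-2, by omega⟩
      have hk2 : n - 1 - 1 = k := by omega
      have hkc : ((k:ℝ)) = (n:ℝ) - 2 := by
        have : (k:ℝ) + 2 = (n:ℝ) := by exact_mod_cast (by omega : k + 2 = n)
        linarith
      have hconth : ∀ t ∈ Icc 0 r₁, ContinuousAt hfun t := by
        intro t ht
        have hvt := hpos t ht.1
        have hRne := (hRpos t hvt).ne'
        exact (continuous_pow (n-1)).continuousAt.mul
          (((hvc.continuousAt.rpow_const (Or.inl hvt.ne')).inv₀ hRne).mul hv'c.continuousAt)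
      have hderivh : ∀ t, 0 < t → HasDerivAt hfun
          (-(t ^ (n-1) * (α * v t + β * t * deriv v t)) / ((n:ℝ)-1)) t := by
        intro t ht
        have hvt := hpos t ht.le
        have hRt := hRpos t hvt
        have h1 : HasDerivAt (fun s => v s ^ (1-m)) (deriv v t * (1-m) * v t ^ (1-m-1)) t :=
          (hvAt t).rpow_const (Or.inl hvt.ne')
        have h2 : HasDerivAt (fun s => (v s ^ (1-m))⁻¹)
            (-(deriv v t * (1-m) * v t ^ (1-m-1)) / (v t ^ (1-m))^2) t :=
          h1.inv hRt.ne'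
        have h3 := h2.mul (hv'At t)
        have h4 := (hasDerivAt_pow (n-1) t).mul h3
        have hgoal : -(t ^ (n-1) * (α * v t + β * t * deriv v t)) / ((n:ℝ)-1)
            = (↑(n-1) * t ^ (n-1-1)) * ((v t ^ (1-m))⁻¹ * deriv v t)
              + t ^ (n-1) * ((-(deriv v t * (1-m) * v t ^ (1-m-1)) / (v t ^ (1-m))^2) * deriv v t
                + (v t ^ (1-m))⁻¹ * deriv (deriv v) t) := by
          rw [lemB t ht, er3 t hvt, hk2, hk, pow_succ]
          have hcast : ((k+1 : ℕ) : ℝ) = (n:ℝ) - 1 := by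
            push_cast [hkc]; ring
          rw [hcast]
          field_simp
          ring
        rw [hgoal]
        exact h4
      have hanti : StrictAntiOn hfun (Icc 0 r₁) := by
        apply strictAntiOn_of_deriv_neg (convex_Icc 0 r₁)
        · intro t ht; exact (hconth t ht).continuousWithinAt
        · intro t ht
          rw [interior_Icc] at ht
          rw [(hderivh t ht.1).deriv]
          have hvt := hpos t ht.1.le
          have hb := hgt0 t ht.1 ht.2.le
          have hsum : 0 < α * v t + β * t * deriv v t := by
            have hx1 : 0 < α * v t := mul_pos hα0 hvt
            have hx2 : 0 < β * (t * deriv v t) := mul_pos hβ0 (mul_pos ht.1 hb)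
            nlinarith
          have ht1 : 0 < t ^ (n-1) := pow_pos ht.1 _
          have : 0 < t ^ (n-1) * (α * v t + β * t * deriv v t) := mul_pos ht1 hsum
          exact div_neg_of_neg_of_pos (neg_lt_zero.mpr this) hN1
      have hmem0 : (0:ℝ) ∈ Icc 0 r₁ := ⟨le_refl 0, h0.le⟩
      have hmem1 : r₁ ∈ Icc 0 r₁ := ⟨h0.le, le_refl r₁⟩
      have hlt := hanti hmem0 hmem1 h0
      have hh0 : hfun 0 = 0 := by
        simp [hhdef, hv0d]
      have hhr₁ : 0 < hfun r₁ := by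
        have hvr := hpos r₁ hr₁
        have := hgt0 r₁ h0 (le_refl r₁)
        have hRr := hRpos r₁ hvr
        simp only [hhdef]
        positivity
      rw [hh0] at hlt
      linarith
    · -- a > 0 : deriv v a = 0, second derivative negative, contradiction to the right
      have hva0 : deriv v a = 0 := by
        refine le_antisymm haS.2 ?_
        have ht : Tendsto (deriv v) (𝓝[>] a) (𝓝 (deriv v a)) :=
          (hv'c.continuousAt).tendsto.mono_left nhdsWithin_le_nhds
        refine ge_of_tendsto ht ?_
        filter_upwards [Ioo_mem_nhdsGT_of_mem (⟨le_refl a, halt⟩ : a ∈ Ico a r₁)] with t ht'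
        exact (hgt t ht'.1 ht'.2.le).le
      have hv''a : deriv (deriv v) a < 0 := by
        have hva := hpos a ha0'.le
        have hRa := hRpos a hva
        rw [lemB a ha0', hva0]
        have key : 0 < α * v a * v a ^ (1-m) / ((n:ℝ)-1) := by positivity
        norm_num
        rw [neg_div]
        exact neg_lt_zero.mpr key
      have hev := aux_ev_lt (hv'At a) hv''a
      have h2 : ∀ᶠ t in 𝓝[>] a, False := by
        filter_upwards [hev, Ioo_mem_nhdsGT_of_mem (⟨le_refl a, halt⟩ : a ∈ Ico a r₁)] with t h1 h2'
        rw [hva0] at h1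
        exact absurd (hgt t h2'.1 h2'.2.le) (not_lt.mpr h1.le)
      obtain ⟨t, ht⟩ := h2.exists
      exact ht
  have hU0 : ∀ r : ℝ, 0 ≤ r → 0 ≤ U r := by
    intro r hr
    have hvr := hpos r hr
    have hd := hvd0 r hr
    simp only [hUdef]
    apply div_nonneg _ hvr.le
    have : r * deriv v r ≤ 0 := mul_nonpos_of_nonneg_of_nonpos hr hd
    nlinarith
  clear_value u₁ ε₁ X₂ c X U
  -- continuity
  have hXc : ∀ x : ℝ, 0 < x → ContinuousAt X x := fun x hx =>
    ((hXd x hx).differentiableAt).continuousAt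
  have hUc : ∀ x : ℝ, 0 < x → ContinuousAt U x := fun x hx =>
    ((hUd x hx).differentiableAt).continuousAt
  -- pointwise sign facts
  have e2gen : ∀ r : ℝ, U r ≤ u₁ → ε₁ ≤ α - β * U r / ((n:ℝ)-1) := by
    intro r hu
    rw [← hkey]
    have h1 : β * U r / ((n:ℝ)-1) ≤ β * u₁ / ((n:ℝ)-1) := by gcongr
    linarith
  have P1 : ∀ r : ℝ, 1 ≤ r → U r ≤ u₁ → X₂ ≤ X r →
      deriv (fun t => X t - c * U t) r ≤ 0 := by
    intro r hr hu hX2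
    have hr0 : (0:ℝ) < r := lt_of_lt_of_le one_pos hr
    have hd : HasDerivAt (fun t => X t - c * U t) _ r := (hXd r hr0).sub ((hUd r hr0).const_mul c)
    rw [hd.deriv]
    have hu0 := hU0 r hr0.le
    have hX0 := hXpos r hr0
    have e1 : X r * (2 - (1-m) * U r / ((n:ℝ)-1)) ≤ 2 * X r := by
      have h1 : 0 ≤ (1-m) * U r / ((n:ℝ)-1) := by positivity
      nlinarith
    have e2 := e2gen r hu
    have t1 : ε₁ * X r ≤ (α - β * U r/((n:ℝ)-1)) * X r := mul_le_mul_of_nonneg_right e2 hX0.le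
    have t2 : ((n:ℝ)-2) * U r ≤ ((n:ℝ)-2) * u₁ := mul_le_mul_of_nonneg_left hu hN2.le
    have t3 : 0 ≤ m * (U r)^2/((n:ℝ)-1) := by positivity
    have e3 : ε₁ * X r - ((n:ℝ)-2) * u₁
        ≤ (α - β * U r/((n:ℝ)-1)) * X r - ((n:ℝ)-2) * U r + m * (U r)^2/((n:ℝ)-1) := by
      linarith
    have t4 : c * (ε₁ * X r - ((n:ℝ)-2)*u₁)
        ≤ c * ((α - β * U r/((n:ℝ)-1)) * X r - ((n:ℝ)-2) * U r + m * (U r)^2/((n:ℝ)-1)) :=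
      mul_le_mul_of_nonneg_left e3 hc0.le
    have t5 : c * (ε₁ * X r - ((n:ℝ)-2)*u₁) = (8/3) * X r - (2/3) * X₂ := by
      have hA : c * (ε₁ * X r) = (c * ε₁) * X r := by ring
      have hB : c * (((n:ℝ)-2)*u₁) = 2/3 * X₂ := hcX
      rw [mul_sub, hA, hcε, hB]
    have t6 : (2/3:ℝ) * X₂ ≤ (2/3) * X r := by linarith
    have hnum : X r * (2 - (1-m)*U r/((n:ℝ)-1))
        - c * ((α - β*U r/((n:ℝ)-1))*X r - ((n:ℝ)-2)*U r + m*(U r)^2/((n:ℝ)-1)) ≤ 0 := by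
      linarith
    have hsplit : X r * (2 - (1-m)*U r/((n:ℝ)-1))/r
        - c * (((α - β*U r/((n:ℝ)-1))*X r - ((n:ℝ)-2)*U r + m*(U r)^2/((n:ℝ)-1))/r)
        = (X r * (2 - (1-m)*U r/((n:ℝ)-1))
          - c * ((α - β*U r/((n:ℝ)-1))*X r - ((n:ℝ)-2)*U r + m*(U r)^2/((n:ℝ)-1)))/r := by
      field_simp
    rw [hsplit]
    exact div_nonpos_of_nonpos_of_nonneg hnum hr0.le
  have P2 : ∀ r : ℝ, 1 ≤ r → U r ≤ u₁ → X₂ ≤ X r →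
      0 < ((α - β * U r / ((n:ℝ)-1)) * X r - ((n:ℝ)-2) * U r + m * (U r)^2 / ((n:ℝ)-1)) / r := by
    intro r hr hu hX2
    have hr0 : (0:ℝ) < r := lt_of_lt_of_le one_pos hr
    have hu0 := hU0 r hr0.le
    have hX0 := hXpos r hr0
    apply div_pos _ hr0
    have e2 := e2gen r hu
    have t1 : ε₁ * X r ≤ (α - β * U r/((n:ℝ)-1)) * X r := mul_le_mul_of_nonneg_right e2 hX0.le
    have t2 : ((n:ℝ)-2) * U r ≤ ((n:ℝ)-2) * u₁ := mul_le_mul_of_nonneg_left hu hN2.le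
    have t3 : 0 ≤ m * (U r)^2/((n:ℝ)-1) := by positivity
    have t4 : ((n:ℝ)-2) * u₁ = ε₁ * X₂ / 4 := by
      rw [hX₂def]
      field_simp
    have t5 : ε₁ * X₂ ≤ ε₁ * X r := mul_le_mul_of_nonneg_left hX2 hε₁0.le
    have t6 : 0 < ε₁ * X₂ := mul_pos hε₁0 hX₂0
    nlinarith
  have P3 : ∀ r : ℝ, 1 ≤ r → u₁ ≤ U r → X r * (2 - (1-m) * U r / ((n:ℝ)-1)) / r ≤ 0 := by
    intro r hr hu
    have hr0 : (0:ℝ) < r := lt_of_lt_of_le one_pos hr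
    have hX0 := hXpos r hr0
    apply div_nonpos_of_nonpos_of_nonneg _ hr0.le
    have h1 : (1-m) * u₁ / ((n:ℝ)-1) ≤ (1-m) * U r / ((n:ℝ)-1) := by gcongr
    have h2 : 2 < (1-m) * u₁ / ((n:ℝ)-1) := by
      rw [lt_div_iff₀ hN1]
      linarith [hu₁2]
    have h3 : 2 - (1-m)*U r/((n:ℝ)-1) ≤ 0 := by linarith
    exact mul_nonpos_of_nonneg_of_nonpos hX0.le h3
  -- invariance of the region {U ≥ u₁} while X stays large
  have claimU : ∀ rb rs : ℝ, 1 ≤ rb → rb ≤ rs → u₁ ≤ U rb →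
      (∀ t, t ∈ Icc rb rs → X₂ ≤ X t) → ∀ t, t ∈ Icc rb rs → u₁ ≤ U t := by
    intro rb rs hrb hrbs hUrb hXs t ht
    by_contra hc
    push_neg at hc
    set bad := {x | x ∈ Icc rb rs ∧ U x < u₁} with hbaddef
    have hbadne : bad.Nonempty := ⟨t, ht, hc⟩
    have hbdd : BddBelow bad := ⟨rb, fun x hx => hx.1.1⟩
    set rh := sInf bad with hrhdef
    have hrhlb : ∀ x ∈ bad, rh ≤ x := fun x hx => csInf_le hbdd hx
    have hrhmem : rh ∈ Icc rb rs := ⟨le_csInf hbadne (fun x hx => hx.1.1),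
      le_trans (hrhlb t ⟨ht, hc⟩) ht.2⟩
    have hrh1 : (1:ℝ) ≤ rh := le_trans hrb hrhmem.1
    have hrh0 : (0:ℝ) < rh := lt_of_lt_of_le one_pos hrh1
    have hUrhle : U rh ≤ u₁ := by
      have h1 : rh ∈ closure bad := csInf_mem_closure hbadne hbdd
      obtain ⟨us, hus, husl⟩ := mem_closure_iff_seq_limit.mp h1
      have h2 : Tendsto (U ∘ us) atTop (𝓝 (U rh)) := (hUc rh hrh0).tendsto.comp husl
      exact le_of_tendsto h2 (Eventually.of_forall fun k => (hus k).2.le)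
    have hUrhge : u₁ ≤ U rh := by
      rcases eq_or_lt_of_le hrhmem.1 with he|hltb
      · rw [← he]; exact hUrb
      · have hleft : ∀ x, x ∈ Ioo rb rh → u₁ ≤ U x := by
          intro x hx
          by_contra hcx
          push_neg at hcx
          exact absurd (hrhlb x ⟨⟨hx.1.le, le_trans hx.2.le hrhmem.2⟩, hcx⟩) (not_le.mpr hx.2)
        have htnd : Tendsto U (𝓝[<] rh) (𝓝 (U rh)) :=
          (hUc rh hrh0).tendsto.mono_left nhdsWithin_le_nhds
        refine ge_of_tendsto htnd ?_
        filter_upwards [Ioo_mem_nhdsLT_of_mem (⟨hltb, le_refl rh⟩ : rh ∈ Ioc rb rh)] with x hx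
        exact hleft x hx
    have hUrh : U rh = u₁ := le_antisymm hUrhle hUrhge
    have hpos' := P2 rh hrh1 (le_of_eq hUrh) (hXs rh hrhmem)
    have hev := aux_ev_gt (hUd rh hrh0) hpos'
    have hev2 : ∀ᶠ x in 𝓝[>] rh, x ∉ bad := by
      filter_upwards [hev] with x hx hxbad
      rw [hUrh] at hx
      exact absurd hxbad.2 (not_lt.mpr hx.le)
    obtain ⟨w, hw, hwsub⟩ := mem_nhdsGT_iff_exists_Ioo_subset.mp hev2
    have hlow : ∀ x ∈ bad, w ≤ x := by
      intro x hx
      by_contra hxw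
      push_neg at hxw
      have hx1 : rh ≤ x := hrhlb x hx
      have hxne : rh ≠ x := by
        intro he
        rw [← he] at hx
        exact absurd hx.2 (not_lt.mpr hUrhge)
      exact (hwsub ⟨lt_of_le_of_ne hx1 hxne, hxw⟩) hx
    have hwrh : w ≤ rh := le_csInf hbadne hlow
    exact absurd (mem_Ioi.mp hw) (not_lt.mpr hwrh)
  -- final bound
  have hcu : 0 < c * u₁ := mul_pos hc0 hu₁0
  have hK0 : (0:ℝ) < max (X 1) X₂ := lt_of_lt_of_le hX₂0 (le_max_right _ _)
  refine ⟨max (X 1) X₂ + c * u₁, by linarith, ?_⟩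
  intro rS hrS
  suffices hfin : X rS ≤ max (X 1) X₂ + c * u₁ by
    have heq : rS ^ 2 * v rS ^ (1 - m) = X rS := by rw [hXdef]
    rw [heq]
    exact hfin
  set K := max (X 1) X₂ with hKdef
  have hKX₂ : X₂ ≤ K := le_max_right _ _
  have hK1 : X 1 ≤ K := le_max_left _ _
  have hrS0 : (0:ℝ) < rS := lt_of_lt_of_le one_pos hrS
  set A := {x | x ∈ Icc 1 rS ∧ X x - c * min (U x) u₁ ≤ K} with hAdef
  have hcontA : ∀ x ∈ Icc (1:ℝ) rS, ContinuousAt (fun y => X y - c * min (U y) u₁) x := by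
    intro x hx
    have hx0 : (0:ℝ) < x := lt_of_lt_of_le one_pos hx.1
    exact (hXc x hx0).sub (((hUc x hx0).min continuousAt_const).const_mul c)
  have h1A : (1:ℝ) ∈ A := by
    refine ⟨⟨le_refl 1, hrS⟩, ?_⟩
    have hU10 : 0 ≤ U 1 := hU0 1 (by norm_num)
    have hmin : 0 ≤ min (U 1) u₁ := le_min hU10 hu₁0.le
    linarith only [hK1, mul_nonneg hc0.le hmin]
  have hAclosed : IsClosed A := aux_closed_le isClosed_Icc hcontA K
  have hAbdd : BddAbove A := ⟨rS, fun x hx => hx.1.2⟩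
  have hr₁A : sSup A ∈ A := hAclosed.csSup_mem ⟨1, h1A⟩ hAbdd
  set r₁ := sSup A with hr₁def
  have h1r₁ : (1:ℝ) ≤ r₁ := hr₁A.1.1
  have hr₁0 : (0:ℝ) < r₁ := lt_of_lt_of_le one_pos h1r₁
  have hr₁rS : r₁ ≤ rS := hr₁A.1.2
  have hminr₁ : min (U r₁) u₁ ≤ u₁ := min_le_right _ _
  have hminr₁' : min (U r₁) u₁ ≤ U r₁ := min_le_left _ _
  have hXr₁ : X r₁ ≤ K + c * u₁ := by
    linarith only [hr₁A.2, mul_le_mul_of_nonneg_left hminr₁ hc0.le]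
  have hGr₁ : X r₁ - c * U r₁ ≤ K := by
    linarith only [hr₁A.2, mul_le_mul_of_nonneg_left hminr₁' hc0.le]
  rcases eq_or_lt_of_le hr₁rS with heq|hlt
  · rw [← heq]
    exact hXr₁
  have hout : ∀ x, r₁ < x → x ≤ rS → K < X x - c * min (U x) u₁ := by
    intro x hx1 hx2
    by_contra hcx
    push_neg at hcx
    exact absurd (le_csSup hAbdd ⟨⟨le_trans h1r₁ hx1.le, hx2⟩, hcx⟩) (not_le.mpr hx1)
  have hXbig : ∀ x, r₁ < x → x ≤ rS → X₂ ≤ X x := by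
    intro x hx1 hx2
    have h1 := hout x hx1 hx2
    have hx0 : (0:ℝ) < x := lt_trans hr₁0 hx1
    have hmin0 : 0 ≤ min (U x) u₁ := le_min (hU0 x hx0.le) hu₁0.le
    linarith only [h1, mul_nonneg hc0.le hmin0, hKX₂]
  have caseG : ∀ re, r₁ < re → re ≤ rS → (∀ x, r₁ < x → x < re → U x < u₁) →
      X re - c * U re ≤ K := by
    intro re h1 h2 hUlt
    have hre0 : (0:ℝ) < re := lt_trans hr₁0 h1
    have hanti : AntitoneOn (fun y => X y - c * U y) (Ioc r₁ re) := by
      apply antitoneOn_of_deriv_nonpos (convex_Ioc r₁ re)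
      · intro x hx
        have hx0 : (0:ℝ) < x := lt_trans hr₁0 hx.1
        exact ((hXc x hx0).sub ((hUc x hx0).const_mul c)).continuousWithinAt
      · intro x hx
        rw [interior_Ioc] at hx
        have hx0 : (0:ℝ) < x := lt_trans hr₁0 hx.1
        exact ((hXd x hx0).sub ((hUd x hx0).const_mul c)).differentiableAt.differentiableWithinAt
      · intro x hx
        rw [interior_Ioc] at hx
        have hx1 : (1:ℝ) ≤ x := le_trans h1r₁ hx.1.le
        exact P1 x hx1 (hUlt x hx.1 hx.2).le (hXbig x hx.1 (le_trans hx.2.le h2))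
    have hlim : Tendsto (fun y => X y - c * U y) (𝓝[>] r₁) (𝓝 (X r₁ - c * U r₁)) :=
      ((hXc r₁ hr₁0).sub ((hUc r₁ hr₁0).const_mul c)).tendsto.mono_left nhdsWithin_le_nhds
    have hle : X re - c * U re ≤ X r₁ - c * U r₁ := by
      refine ge_of_tendsto hlim ?_
      filter_upwards [Ioo_mem_nhdsGT_of_mem (⟨le_refl r₁, h1⟩ : r₁ ∈ Ico r₁ re)] with x hx
      exact hanti ⟨hx.1, hx.2.le⟩ ⟨h1, le_refl re⟩ hx.2.le
    linarith only [hGr₁, hle]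
  by_cases hB : ∃ x, x ∈ Ioc r₁ rS ∧ u₁ ≤ U x
  · -- eventually U climbs above u₁
    obtain ⟨x₀, hx₀, hx₀u⟩ := hB
    set B := {x | x ∈ Ioc r₁ rS ∧ u₁ ≤ U x} with hBdef
    have hBne : B.Nonempty := ⟨x₀, hx₀, hx₀u⟩
    have hBbdd : BddBelow B := ⟨r₁, fun x hx => hx.1.1.le⟩
    set rm := sInf B with hrmdef
    have hrmlb : ∀ x ∈ B, rm ≤ x := fun x hx => csInf_le hBbdd hx
    have hrmge : r₁ ≤ rm := le_csInf hBne (fun x hx => hx.1.1.le)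
    have hrmle : rm ≤ rS := le_trans (hrmlb x₀ ⟨hx₀, hx₀u⟩) hx₀.2
    rcases eq_or_lt_of_le hrmge with hrmeq|hrmlt
    · -- U ≥ u₁ on all of (r₁, rS]
      have hallU : ∀ x, r₁ < x → x ≤ rS → u₁ ≤ U x := by
        intro x hx1 hx2
        have hsx : sInf B < x := by rw [← hrmdef, ← hrmeq]; exact hx1
        obtain ⟨b, hbB, hbx⟩ := (csInf_lt_iff hBbdd hBne).mp hsx
        exact claimU b rS (le_trans h1r₁ hbB.1.1.le) hbB.1.2 hbB.2
          (fun s hs => hXbig s (lt_of_lt_of_le hbB.1.1 hs.1) hs.2) x ⟨hbx.le, hx2⟩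
      have hantiX : AntitoneOn X (Icc r₁ rS) := by
        apply antitoneOn_of_deriv_nonpos (convex_Icc r₁ rS)
        · intro x hx
          exact (hXc x (lt_of_lt_of_le hr₁0 hx.1)).continuousWithinAt
        · intro x hx
          rw [interior_Icc] at hx
          exact (hXd x (lt_trans hr₁0 hx.1)).differentiableAt.differentiableWithinAt
        · intro x hx
          rw [interior_Icc] at hx
          rw [(hXd x (lt_trans hr₁0 hx.1)).deriv]
          exact P3 x (le_trans h1r₁ hx.1.le) (hallU x hx.1 hx.2.le)
      have hX2le := hantiX (left_mem_Icc.mpr hr₁rS) (right_mem_Icc.mpr hr₁rS) hr₁rS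
      linarith only [hXr₁, hX2le]
    · -- r₁ < rm : decrease of X - cU up to rm, then X decreases
      have hUrmlt : ∀ x, r₁ < x → x < rm → U x < u₁ := by
        intro x hx1 hx2
        by_contra hcx
        push_neg at hcx
        exact absurd (hrmlb x ⟨⟨hx1, le_trans hx2.le hrmle⟩, hcx⟩) (not_le.mpr hx2)
      have hrm0 : (0:ℝ) < rm := lt_trans hr₁0 hrmlt
      have hrm1 : (1:ℝ) ≤ rm := le_trans h1r₁ hrmge
      have hUrmge : u₁ ≤ U rm := by
        have h1 : rm ∈ closure B := csInf_mem_closure hBne hBbdd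
        obtain ⟨us, hus, husl⟩ := mem_closure_iff_seq_limit.mp h1
        have h2 : Tendsto (U ∘ us) atTop (𝓝 (U rm)) := (hUc rm hrm0).tendsto.comp husl
        exact ge_of_tendsto h2 (Eventually.of_forall fun k => (hus k).2)
      have hUrmle : U rm ≤ u₁ := by
        have htnd : Tendsto U (𝓝[<] rm) (𝓝 (U rm)) :=
          (hUc rm hrm0).tendsto.mono_left nhdsWithin_le_nhds
        refine le_of_tendsto htnd ?_
        filter_upwards [Ioo_mem_nhdsLT_of_mem (⟨hrmlt, le_refl rm⟩ : rm ∈ Ioc r₁ rm)] with x hx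
        exact (hUrmlt x hx.1 hx.2).le
      have hUrm : U rm = u₁ := le_antisymm hUrmle hUrmge
      have hGrm := caseG rm hrmlt hrmle hUrmlt
      have hXrm : X rm ≤ K + c * u₁ := by
        rw [hUrm] at hGrm
        linarith only [hGrm]
      have hallU : ∀ t, t ∈ Icc rm rS → u₁ ≤ U t :=
        claimU rm rS hrm1 hrmle (le_of_eq hUrm.symm)
          (fun t ht => hXbig t (lt_of_lt_of_le hrmlt ht.1) ht.2)
      have hantiX : AntitoneOn X (Icc rm rS) := by
        apply antitoneOn_of_deriv_nonpos (convex_Icc rm rS)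
        · intro x hx
          exact (hXc x (lt_of_lt_of_le hrm0 hx.1)).continuousWithinAt
        · intro x hx
          rw [interior_Icc] at hx
          exact (hXd x (lt_trans hrm0 hx.1)).differentiableAt.differentiableWithinAt
        · intro x hx
          rw [interior_Icc] at hx
          rw [(hXd x (lt_trans hrm0 hx.1)).deriv]
          exact P3 x (le_trans hrm1 hx.1.le) (hallU x ⟨hx.1.le, hx.2.le⟩)
      have hX2le := hantiX (left_mem_Icc.mpr hrmle) (right_mem_Icc.mpr hrmle) hrmle
      linarith only [hXrm, hX2le]
  · push_neg at hB
    have h3 := caseG rS hlt (le_refl rS) (fun x hx1 hx2 => hB x ⟨hx1, hx2.le⟩)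
    have h4 : U rS < u₁ := hB rS ⟨hlt, le_refl rS⟩
    have h5 : 0 ≤ U rS := hU0 rS hrS0.le
    linarith only [h3, mul_le_mul_of_nonneg_left h4.le hc0.le]
end

section
/- Suppose the radial solution v of the ODE satisfies r² v(r)^(1-m) ≤ C₁ for all r ≥ 1, and ∫₀^∞ z^(n-1) v(z) dz < ∞ with β ≤ 0. Then r² v(r)^(1-m) → 0 as r → ∞ along any convergent subsequence; i.e., every subsequential limit of w(r) = r² v(r)^(1-m) as r → ∞ equals 0. -/
open Filter Topology MeasureTheory Set

set_option maxHeartbeats 2000000 in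
theorem stmt_17 (n : ℕ) (hn : 3 ≤ n) (m ρ α β η : ℝ)
    (hm : 0 < m) (hm2 : m < ((n : ℝ) - 2) / n) (hρ : 0 < ρ)
    (hα : α = (2 * β + ρ) / (1 - m)) (hη : 0 < η)
    (v : ℝ → ℝ) (hv : ContDiff ℝ 2 v) (hpos : ∀ r, 0 ≤ r → 0 < v r)
    (hode : ∀ r, 0 < r →
      ((n : ℝ) - 1) / m * (deriv (deriv (fun s => v s ^ m)) r
        + (((n : ℝ) - 1) / r) * deriv (fun s => v s ^ m) r)
      + α * v r + β * r * deriv v r = 0)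
    (hv0 : v 0 = η) (hv0d : deriv v 0 = 0)
    (C₁ : ℝ) (hC₁ : 0 < C₁) (hw : ∀ r, 1 ≤ r → r ^ 2 * v r ^ (1 - m) ≤ C₁)
    (hL1 : IntegrableOn (fun z => z ^ (n - 1) * v z) (Set.Ioi (0 : ℝ)))
    (hβ : β ≤ 0) :
    ∀ (r : ℕ → ℝ) (L : ℝ), Tendsto r atTop atTop →
      Tendsto (fun i => (r i) ^ 2 * v (r i) ^ (1 - m)) atTop (𝓝 L) → L = 0 := by
  obtain ⟨k, rfl⟩ : ∃ k, n = k + 3 := ⟨n - 3, by omega⟩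
  intro r L hr hwL
  by_contra hL0
  have hcast : ((k + 3 : ℕ) : ℝ) = (k : ℝ) + 3 := by push_cast; ring
  rw [hcast] at hm2 hode
  have hk3 : (0:ℝ) < (k:ℝ) + 3 := by positivity
  rw [lt_div_iff₀ hk3] at hm2
  -- hm2 : m * ((k:ℝ)+3) < (k:ℝ)+3-2
  have hk0 : (0:ℝ) ≤ (k:ℝ) := Nat.cast_nonneg k
  have hm1 : m < 1 := by nlinarith
  have hp : 0 < 1 - m := by linarith
  set p : ℝ := 1 - m with hp_def
  set q : ℝ := 2 / p with hq_def
  have hpq : q * p = 2 := by rw [hq_def]; field_simp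
  have hq0 : 0 < q := by rw [hq_def]; exact div_pos two_pos hp
  have hp1 : p < 1 := by rw [hp_def]; linarith
  have hq2 : 2 ≤ q := by nlinarith
  have hqn : q < (k:ℝ) + 3 := by
    rw [hq_def, div_lt_iff₀ hp]
    rw [hp_def]; nlinarith [hm2]
  have e1 : q * m = q - 2 := by
    have h := hpq; rw [hp_def] at h; linarith [h]
  have eExp : (2:ℝ) * (m/p) = q - 2 := by
    calc (2:ℝ) * (m/p) = m * (2/p) := by ring
      _ = m * q := by rw [← hq_def]
      _ = q - 2 := by rw [mul_comm]; exact e1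
  have eExp2 : ((2:ℝ)-q) * ((1:ℝ)/m) = -q := by
    field_simp
    linarith [e1]
  clear_value p q
  -- L positive
  have hr1 : ∀ᶠ i in atTop, 1 ≤ r i := hr.eventually_ge_atTop 1
  have hL0' : 0 ≤ L := by
    refine ge_of_tendsto hwL ?_
    filter_upwards [hr1] with i hi
    have h1 : 0 < v (r i) := hpos _ (by linarith)
    positivity
  have hL : 0 < L := lt_of_le_of_ne hL0' (Ne.symm hL0)
  -- regularity of u = v^m
  set u : ℝ → ℝ := fun s => v s ^ m with hu_def
  set U : Set ℝ := {x | 0 < v x} with hU_def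
  have hUo : IsOpen U := isOpen_lt continuous_const hv.continuous
  have hmemU : ∀ x : ℝ, 0 < x → x ∈ U := fun x hx => hpos x hx.le
  have huC : ContDiffOn ℝ 2 u U := fun x hx =>
    ((hv.contDiffAt).rpow_const_of_ne (ne_of_gt hx)).contDiffWithinAt
  have hgC : ContDiffOn ℝ 1 (deriv u) U := huC.deriv_of_isOpen hUo (by norm_num)
  have hgdiff : ∀ x ∈ U, DifferentiableAt ℝ (deriv u) x := fun x hx =>
    (hgC.differentiableOn one_ne_zero).differentiableAt (hUo.mem_nhds hx)
  have hgcont : ContinuousOn (deriv u) U := hgC.continuousOn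
  have hudiff : ∀ x ∈ U, HasDerivAt u (deriv u x) x := fun x hx =>
    (((hv.contDiffAt).rpow_const_of_ne (ne_of_gt hx)).differentiableAt (by norm_num)).hasDerivAt
  clear_value u U
  -- polynomial form of the ODE
  have hodeP : ∀ s : ℝ, 0 < s →
      ((k:ℝ)+2) * (s * deriv (deriv u) s) + ((k:ℝ)+2)^2 * deriv u s
        + m * s * (α * v s) + m * s^2 * (β * deriv v s) = 0 := by
    intro s hs
    have h := hode s hs
    have hs0 : s ≠ 0 := ne_of_gt hs
    have hm0 : m ≠ 0 := ne_of_gt hm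
    field_simp at h
    linear_combination h
  -- the function H and its derivative
  set D : ℝ := m * (((k:ℝ)+3) * β - α) with hD_def
  set H : ℝ → ℝ :=
    fun s => ((k:ℝ)+2) * (s^(k+2) * deriv u s) + m * β * (s^(k+3) * v s) with hH_def
  have hH : ∀ s : ℝ, 0 < s → HasDerivAt H (D * (s^(k+2) * v s)) s := by
    intro s hs
    have h1 : HasDerivAt (fun t : ℝ => t ^ (k+2)) (((k:ℝ)+2) * s^(k+1)) s := by
      have := hasDerivAt_pow (k+2) s
      refine this.congr_deriv ?_
      rw [show k + 2 - 1 = k + 1 by omega]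
      push_cast
      ring
    have h2 : HasDerivAt (fun t : ℝ => t ^ (k+3)) (((k:ℝ)+3) * s^(k+2)) s := by
      have := hasDerivAt_pow (k+3) s
      refine this.congr_deriv ?_
      rw [show k + 3 - 1 = k + 2 by omega]
      push_cast
      ring
    have h3 : HasDerivAt (deriv u) (deriv (deriv u) s) s := (hgdiff s (hmemU s hs)).hasDerivAt
    have h4 : HasDerivAt v (deriv v s) s := ((hv.differentiable (by norm_num)) s).hasDerivAt
    have h5 := ((h1.mul h3).const_mul ((k:ℝ)+2)).add ((h2.mul h4).const_mul (m * β))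
    rw [hH_def]
    refine h5.congr_deriv ?_
    have hP := hodeP s hs
    rw [hD_def]
    linear_combination (s^(k+1)) * hP
  clear_value D H
  -- integrability
  have hIback : IntegrableOn (fun z : ℝ => z ^ (k+2) * v z) (Ioi (0:ℝ)) := by
    have e : k + 3 - 1 = k + 2 := by omega
    simpa [e] using hL1
  set I : ℝ := ∫ z in Ioi (0:ℝ), z^(k+2) * v z with hI_def
  have hI0 : 0 ≤ I := by
    rw [hI_def]
    exact setIntegral_nonneg measurableSet_Ioi
      (fun z hz => mul_nonneg (pow_nonneg (le_of_lt hz) _) (hpos z (le_of_lt hz)).le)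
  have hfae : 0 ≤ᵐ[volume.restrict (Ioi (0:ℝ))] fun z : ℝ => z^(k+2) * v z := by
    filter_upwards [ae_restrict_mem measurableSet_Ioi] with z hz
    exact mul_nonneg (pow_nonneg (le_of_lt hz) _) (hpos z (le_of_lt hz)).le
  have hJ : ∀ y : ℝ, 1 ≤ y → |∫ s in (1:ℝ)..y, s^(k+2) * v s| ≤ I := by
    intro y hy
    have h3 : 0 ≤ ∫ s in (1:ℝ)..y, s^(k+2)*v s :=
      intervalIntegral.integral_nonneg hy (fun x hx =>
        mul_nonneg (pow_nonneg (by linarith [hx.1]) _) (hpos x (by linarith [hx.1])).le)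
    rw [abs_of_nonneg h3, intervalIntegral.integral_of_le hy]
    have hsub : Ioc (1:ℝ) y ⊆ Ioi 0 := fun x hx => lt_trans one_pos hx.1
    rw [hI_def]
    exact setIntegral_mono_set hIback hfae (HasSubset.Subset.eventuallyLE hsub)
  clear_value I
  -- pointwise upper bound on v
  set K : ℝ := C₁ ^ ((1:ℝ)/p) with hK_def
  have hK : 0 < K := Real.rpow_pos_of_pos hC₁ _
  clear_value K
  have hvK : ∀ y : ℝ, 1 ≤ y → v y ≤ K * y ^ (-q) := by
    intro y hy
    have hy0 : 0 < y := lt_of_lt_of_le one_pos hy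
    have hvy : 0 < v y := hpos y hy0.le
    have h1 : v y ^ p ≤ C₁ / y^2 := by
      rw [le_div_iff₀ (pow_pos hy0 2)]
      linarith [hw y hy]
    have h2 : (v y ^ p) ^ ((1:ℝ)/p) ≤ (C₁ / y^2) ^ ((1:ℝ)/p) :=
      Real.rpow_le_rpow (Real.rpow_nonneg hvy.le _) h1 (le_of_lt (one_div_pos.2 hp))
    have h3 : (v y ^ p) ^ ((1:ℝ)/p) = v y := by
      rw [← Real.rpow_mul hvy.le, mul_one_div, div_self (ne_of_gt hp), Real.rpow_one]
    have h4 : (C₁ / y^2) ^ ((1:ℝ)/p) = K * y ^ (-q) := by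
      rw [Real.div_rpow hC₁.le (by positivity), hK_def, div_eq_mul_inv]
      congr 1
      rw [← Real.rpow_natCast y 2, ← Real.rpow_mul hy0.le, ← Real.rpow_neg hy0.le]
      congr 1
      rw [hq_def]
      push_cast
      ring
    rw [← h3, ← h4]
    
    exact h2
  -- constants A and B, and the gradient bound
  set A : ℝ := |H 1| + |D| * I with hA_def
  have hA0 : 0 ≤ A := by
    rw [hA_def]
    exact add_nonneg (abs_nonneg _) (mul_nonneg (abs_nonneg _) hI0)
  set B : ℝ := m * |β| * K with hB_def
  have hB0 : 0 ≤ B := by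
    rw [hB_def]
    exact mul_nonneg (mul_nonneg hm.le (abs_nonneg _)) hK.le
  clear_value A B
  have hyconv : ∀ y : ℝ, 0 < y → ∀ j : ℕ, (y^j : ℝ) = y ^ (j : ℝ) := by
    intro y hy j
    rw [Real.rpow_natCast]
  have hgb : ∀ y : ℝ, 1 ≤ y → |deriv u y| ≤ A * y^(-((k:ℝ)+2)) + B * y^(1-q) := by
    intro y hy
    have hy0 : 0 < y := lt_of_lt_of_le one_pos hy
    -- FTC for H on [1, y]
    have hderiv : ∀ x ∈ uIcc (1:ℝ) y, HasDerivAt H (D * (x^(k+2)*v x)) x := by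
      intro x hx
      rw [uIcc_of_le hy] at hx
      exact hH x (lt_of_lt_of_le one_pos hx.1)
    have hcont : IntervalIntegrable (fun x : ℝ => D * (x^(k+2)*v x)) volume 1 y :=
      ((continuous_const.mul ((continuous_pow _).mul hv.continuous)).intervalIntegrable 1 y)
    have hftc := intervalIntegral.integral_eq_sub_of_hasDerivAt hderiv hcont
    rw [intervalIntegral.integral_const_mul] at hftc
    have h6 : |H y| ≤ A := by
      have h7 : H y = H 1 + D * ∫ s in (1:ℝ)..y, s^(k+2)*v s := by linarith [hftc]
      rw [h7, hA_def]
      calc |H 1 + D * ∫ s in (1:ℝ)..y, s^(k+2)*v s|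
          ≤ |H 1| + |D * ∫ s in (1:ℝ)..y, s^(k+2)*v s| := abs_add_le _ _
        _ = |H 1| + |D| * |∫ s in (1:ℝ)..y, s^(k+2)*v s| := by rw [abs_mul]
        _ ≤ |H 1| + |D| * I := by
            have hh := mul_le_mul_of_nonneg_left (hJ y hy) (abs_nonneg D)
            linarith [hh]
    -- unpack H into deriv u
    have h7 : ((k:ℝ)+2) * (y^(k+2) * deriv u y) = H y - m*β*(y^(k+3) * v y) := by
      rw [hH_def]; ring
    have hvy : 0 < v y := hpos y hy0.le
    have h8 : |((k:ℝ)+2) * (y^(k+2)*deriv u y)| ≤ A + m * |β| * (y^(k+3) * v y) := by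
      rw [h7]
      refine (abs_sub _ _).trans ?_
      have : |m*β*(y^(k+3) * v y)| = m * |β| * (y^(k+3) * v y) := by
        rw [abs_mul, abs_mul, abs_of_nonneg hm.le,
          abs_of_nonneg (by positivity : (0:ℝ) ≤ y^(k+3) * v y)]
      rw [this]
      linarith [h6]
    have h9 : m * |β| * (y^(k+3) * v y) ≤ B * (y^(k+3) * y^(-q)) := by
      rw [hB_def]
      have h10 : v y ≤ K * y^(-q) := hvK y hy
      have h11 : (0:ℝ) ≤ y^(k+3) := by positivity
      linarith [mul_le_mul_of_nonneg_left h10 (mul_nonneg (mul_nonneg hm.le (abs_nonneg β)) h11)]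
    have hyk : (0:ℝ) < ((k:ℝ)+2) * y^(k+2) := by positivity
    rw [← mul_le_mul_iff_of_pos_right hyk]
    have hval : |deriv u y| * (((k:ℝ)+2) * y^(k+2)) ≤ A + B * (y^(k+3) * y^(-q)) := by
      have habs : |((k:ℝ)+2) * (y^(k+2)*deriv u y)| = |deriv u y| * (((k:ℝ)+2) * y^(k+2)) := by
        rw [abs_mul, abs_mul, abs_of_nonneg (by positivity : (0:ℝ) ≤ (k:ℝ)+2),
          abs_of_nonneg (by positivity : (0:ℝ) ≤ (y:ℝ)^(k+2))]
        ring
      rw [habs] at h8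
      linarith
    refine hval.trans ?_
    -- A + B * t ≤ (A y^{-(k+2)} + B y^{1-q}) * ((k+2) y^{k+2})
    have i1 : y ^ (-((k:ℝ)+2)) * y^(k+2) = 1 := by
      rw [hyconv y hy0 (k+2), ← Real.rpow_add hy0,
        show -((k:ℝ)+2) + (((k+2:ℕ)):ℝ) = 0 by push_cast; ring, Real.rpow_zero]
    have i2 : y ^ ((1:ℝ)-q) * y^(k+2) = y^(k+3) * y^(-q) := by
      rw [hyconv y hy0 (k+2), hyconv y hy0 (k+3), ← Real.rpow_add hy0, ← Real.rpow_add hy0]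
      congr 1
      push_cast
      ring
    have ht0 : (0:ℝ) ≤ y^(k+3) * y^(-q) := by positivity
    have expand : (A * y^(-((k:ℝ)+2)) + B * y^(1-q)) * (((k:ℝ)+2) * y^(k+2))
        = ((k:ℝ)+2) * (A * (y ^ (-((k:ℝ)+2)) * y^(k+2)) + B * (y ^ ((1:ℝ)-q) * y^(k+2))) := by
      ring
    rw [expand, i1, i2]
    linarith [mul_nonneg hB0 ht0, mul_nonneg hk0 hA0,
      mul_nonneg hk0 (mul_nonneg hB0 ht0), hA0]
  -- setup for the contradiction
  set M : ℝ := (L/2) ^ (m/p) with hM_def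
  have hM : 0 < M := Real.rpow_pos_of_pos (by linarith) _
  set ε : ℝ := min 1 (M/(4*(B+1))) with hε_def
  have hε : 0 < ε := lt_min one_pos (div_pos hM (by linarith [hB0]))
  have hε1 : ε ≤ 1 := min_le_left _ _
  have hεB : ε * B ≤ M / 4 := by
    have h1 : ε ≤ M / (4 * (B + 1)) := min_le_right _ _
    have h2 : ε * B ≤ M / (4 * (B + 1)) * B := mul_le_mul_of_nonneg_right h1 hB0
    have h3 : M / (4 * (B + 1)) * B ≤ M / 4 := by
      rw [div_mul_eq_mul_div, div_le_div_iff₀ (by linarith [hB0]) (by norm_num)]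
      nlinarith [hM.le, hB0, mul_nonneg hM.le hB0]
    linarith
  set c₂ : ℝ := (M/2) ^ ((1:ℝ)/m) with hc₂_def
  have hc₂ : 0 < c₂ := Real.rpow_pos_of_pos (by linarith) _
  clear_value M ε c₂
  -- eventual facts
  have hev1 : ∀ᶠ i in atTop, L/2 ≤ (r i)^2 * v (r i) ^ p :=
    hwL.eventually (eventually_ge_nhds (by linarith))
  have hev2 : ∀ᶠ i in atTop, A * (r i) ^ (q - ((k:ℝ)+3)) ≤ M/4 := by
    have ht : Tendsto (fun x : ℝ => x ^ (q - ((k:ℝ)+3))) atTop (𝓝 0) := by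
      have h := tendsto_rpow_neg_atTop (y := ((k:ℝ)+3) - q) (by linarith)
      simpa [neg_sub] using h
    have ht2 : Tendsto (fun i => A * (r i) ^ (q - ((k:ℝ)+3))) atTop (𝓝 (A * 0)) :=
      (ht.comp hr).const_mul A
    rw [mul_zero] at ht2
    exact ht2.eventually (eventually_le_nhds (by linarith))
  -- the key lower bound on tail integrals
  have hint : ∀ c d : ℝ, 0 ≤ c → 0 ≤ d →
      IntervalIntegrable (fun z : ℝ => z^(k+2)*v z) volume c d := by
    intro c d hc hd
    rw [intervalIntegrable_iff]
    exact hIback.mono_set (fun t ht => lt_of_le_of_lt (le_min hc hd) ht.1)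
  have hkey : ∀ᶠ i in atTop, ε * c₂ ≤
      (∫ s in (0:ℝ)..((1+ε)*(r i)), s^(k+2)*v s) - ∫ s in (0:ℝ)..(r i), s^(k+2)*v s := by
    filter_upwards [hev1, hev2, hr1] with i hw2 hA4 hx1
    set x : ℝ := r i with hx_def
    have hx0 : 0 < x := by linarith
    have hb0 : 0 ≤ (1+ε)*x := mul_nonneg (by linarith) hx0.le
    have hxb : x ≤ (1+ε)*x := le_mul_of_one_le_left hx0.le (by linarith)
    -- lower bound on u x
    have hvx : 0 < v x := hpos x hx0.le
    have hux : M * x^(2-q) ≤ u x := by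
      have h1 : L/2 / x^2 ≤ v x ^ p := by
        rw [div_le_iff₀ (pow_pos hx0 2)]
        linarith [hw2]
      have h2 : (L/2 / x^2)^(m/p) ≤ (v x ^ p)^(m/p) :=
        Real.rpow_le_rpow (div_nonneg (by linarith) (by positivity)) h1
          (div_nonneg hm.le hp.le)
      have h3 : (v x ^ p)^(m/p) = v x ^ m := by
        rw [← Real.rpow_mul hvx.le]
        congr 1
        field_simp
      have h4 : (L/2 / x^2)^(m/p) = M * x^(2-q) := by
        rw [Real.div_rpow (by linarith) (by positivity), hM_def, div_eq_mul_inv]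
        congr 1
        rw [← Real.rpow_natCast x 2, ← Real.rpow_mul hx0.le, ← Real.rpow_neg hx0.le]
        congr 1
        linarith [eExp]
      rw [hu_def]
      rw [h4, h3] at h2
      exact h2
    -- lower bound on u on the interval
    have hulow2 : ∀ s : ℝ, x ≤ s → s ≤ (1+ε)*x → (M/2) * x^(2-q) ≤ u s := by
      intro s hs hsb
      have hsubU : uIcc x s ⊆ U := by
        rw [uIcc_of_le hs]
        intro t ht
        exact hmemU t (by linarith [ht.1])
      have husub : u s - u x = ∫ t in x..s, deriv u t :=
        (intervalIntegral.integral_eq_sub_of_hasDerivAt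
          (fun t ht => hudiff t (hsubU ht)) ((hgcont.mono hsubU).intervalIntegrable)).symm
      set Cx : ℝ := A * x^(-((k:ℝ)+2)) + B * x^(1-q) with hCx_def
      have hCx0 : 0 ≤ Cx := by
        rw [hCx_def]
        exact add_nonneg (mul_nonneg hA0 (Real.rpow_nonneg hx0.le _))
          (mul_nonneg hB0 (Real.rpow_nonneg hx0.le _))
      have hvar : |u s - u x| ≤ Cx * (ε * x) := by
        rw [husub, ← Real.norm_eq_abs]
        have hb := intervalIntegral.norm_integral_le_of_norm_le_const
          (C := Cx) (f := deriv u) (a := x) (b := s) ?_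
        · refine hb.trans ?_
          rw [abs_of_nonneg (by linarith : (0:ℝ) ≤ s - x)]
          have hsx : s - x ≤ ε * x := by linarith
          exact mul_le_mul_of_nonneg_left hsx hCx0
        · intro t ht
          rw [uIoc_of_le hs] at ht
          have htx : x ≤ t := le_of_lt ht.1
          have ht1 : (1:ℝ) ≤ t := le_trans hx1 htx
          rw [Real.norm_eq_abs]
          refine (hgb t ht1).trans ?_
          rw [hCx_def]
          have m1 : t ^ (-((k:ℝ)+2)) ≤ x ^ (-((k:ℝ)+2)) :=
            Real.rpow_le_rpow_of_nonpos hx0 htx (neg_nonpos.2 (by positivity))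
          have m2 : t ^ ((1:ℝ)-q) ≤ x ^ ((1:ℝ)-q) :=
            Real.rpow_le_rpow_of_nonpos hx0 htx (by linarith)
          linarith [mul_le_mul_of_nonneg_left m1 hA0, mul_le_mul_of_nonneg_left m2 hB0]
      have hx2q : (0:ℝ) < x ^ ((2:ℝ) - q) := Real.rpow_pos_of_pos hx0 _
      have hεx : Cx * (ε * x) = ε * (A * x^(-((k:ℝ)+1))) + (ε * B) * x^((2:ℝ)-q) := by
        rw [hCx_def]
        have j1 : x^(-((k:ℝ)+2)) * x = x^(-((k:ℝ)+1)) := by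
          nth_rewrite 2 [← Real.rpow_one x]
          rw [← Real.rpow_add hx0]
          congr 1
          ring
        have j2 : x^((1:ℝ)-q) * x = x^((2:ℝ)-q) := by
          nth_rewrite 2 [← Real.rpow_one x]
          rw [← Real.rpow_add hx0]
          congr 1
          ring
        calc (A * x^(-((k:ℝ)+2)) + B * x^(1-q)) * (ε * x)
            = ε * (A * (x^(-((k:ℝ)+2)) * x)) + (ε * B) * (x^((1:ℝ)-q) * x) := by ring
          _ = ε * (A * x^(-((k:ℝ)+1))) + (ε * B) * x^((2:ℝ)-q) := by rw [j1, j2]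
      have hterm1 : A * x^(-((k:ℝ)+1)) ≤ (M/4) * x^((2:ℝ)-q) := by
        have h5 := mul_le_mul_of_nonneg_right hA4 hx2q.le
        have j3 : A * x^(q - ((k:ℝ)+3)) * x^((2:ℝ)-q) = A * x^(-((k:ℝ)+1)) := by
          rw [mul_assoc, ← Real.rpow_add hx0]
          congr 2
          ring
        rw [j3] at h5
        exact h5
      have hterm2 : (ε * B) * x^((2:ℝ)-q) ≤ (M/4) * x^((2:ℝ)-q) :=
        mul_le_mul_of_nonneg_right hεB hx2q.le
      have hεA : ε * (A * x^(-((k:ℝ)+1))) ≤ (M/4) * x^((2:ℝ)-q) := by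
        have hAx0 : 0 ≤ A * x^(-((k:ℝ)+1)) :=
          mul_nonneg hA0 (Real.rpow_nonneg hx0.le _)
        calc ε * (A * x^(-((k:ℝ)+1))) ≤ 1 * (A * x^(-((k:ℝ)+1))) :=
              mul_le_mul_of_nonneg_right hε1 hAx0
          _ = A * x^(-((k:ℝ)+1)) := one_mul _
          _ ≤ (M/4) * x^((2:ℝ)-q) := hterm1
      have hlow : u x - Cx * (ε * x) ≤ u s := by
        have := neg_abs_le (u s - u x)
        linarith [hvar]
      rw [hεx] at hlow
      linarith [hux]
    -- lower bound on v on the interval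
    have hvlow : ∀ s : ℝ, x ≤ s → s ≤ (1+ε)*x → c₂ * x^(-q) ≤ v s := by
      intro s hs hsb
      have hvs : 0 < v s := hpos s (by linarith)
      have h1 := hulow2 s hs hsb
      have h2 : ((M/2) * x^((2:ℝ)-q))^((1:ℝ)/m) ≤ (u s)^((1:ℝ)/m) :=
        Real.rpow_le_rpow (mul_nonneg (by linarith) (Real.rpow_nonneg hx0.le _)) h1
          (le_of_lt (one_div_pos.2 hm))
      have h3 : (u s)^((1:ℝ)/m) = v s := by
        rw [hu_def]
        show (v s ^ m) ^ ((1:ℝ)/m) = v s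
        rw [← Real.rpow_mul hvs.le, mul_one_div, div_self (ne_of_gt hm), Real.rpow_one]
      have h4 : ((M/2) * x^((2:ℝ)-q))^((1:ℝ)/m) = c₂ * x^(-q) := by
        rw [Real.mul_rpow (by linarith) (Real.rpow_nonneg hx0.le _), hc₂_def,
          ← Real.rpow_mul hx0.le, eExp2]
      rw [h4, h3] at h2
      exact h2
    -- integral lower bound
    have hmono : ((1+ε)*x - x) • (x^(k+2) * (c₂ * x^(-q))) ≤
        ∫ s in x..((1+ε)*x), s^(k+2)*v s := by
      rw [← intervalIntegral.integral_const]
      refine intervalIntegral.integral_mono_on hxb intervalIntegrable_const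
        (hint x ((1+ε)*x) hx0.le hb0) ?_
      intro s hs
      have hs1 : x ≤ s := hs.1
      have hs2 : s ≤ (1+ε)*x := hs.2
      have hv1 := hvlow s hs1 hs2
      have hcnn : 0 ≤ c₂ * x^(-q) := mul_nonneg hc₂.le (Real.rpow_nonneg hx0.le _)
      have hpows : x^(k+2) ≤ s^(k+2) := pow_le_pow_left₀ hx0.le hs1 _
      have hsk : (0:ℝ) ≤ s^(k+2) := pow_nonneg (by linarith) _
      calc x^(k+2) * (c₂ * x^(-q)) ≤ s^(k+2) * (c₂ * x^(-q)) :=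
            mul_le_mul_of_nonneg_right hpows hcnn
        _ ≤ s^(k+2) * v s := mul_le_mul_of_nonneg_left hv1 hsk
    have hfinal : ε * c₂ ≤ ∫ s in x..((1+ε)*x), s^(k+2)*v s := by
      refine le_trans ?_ hmono
      have hpowx : ((1+ε)*x - x) • (x^(k+2) * (c₂ * x^(-q)))
          = (ε * c₂) * (x * (x ^ ((k:ℝ)+2) * x^(-q))) := by
        rw [smul_eq_mul, hyconv x hx0 (k+2)]
        push_cast
        ring
      rw [hpowx]
      have hcomb : x * (x ^ ((k:ℝ)+2) * x ^ (-q)) = x ^ ((((k:ℝ)+3)) - q) := by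
        nth_rewrite 1 [← Real.rpow_one x]
        rw [← Real.rpow_add hx0, ← Real.rpow_add hx0]
        congr 1
        ring
      rw [hcomb]
      have hge1 : (1:ℝ) ≤ x ^ ((((k:ℝ)+3)) - q) :=
        Real.one_le_rpow hx1 (by linarith)
      exact le_mul_of_one_le_right (mul_nonneg hε.le hc₂.le) hge1
    have hsplit : (∫ s in (0:ℝ)..((1+ε)*x), s^(k+2)*v s) - ∫ s in (0:ℝ)..x, s^(k+2)*v s
        = ∫ s in x..((1+ε)*x), s^(k+2)*v s :=
      intervalIntegral.integral_interval_sub_left (hint 0 ((1+ε)*x) le_rfl hb0)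
        (hint 0 x le_rfl hx0.le)
    rw [hsplit]
    exact hfinal
  -- tendsto of the tail difference to 0
  have hb_top : Tendsto (fun i => (1+ε) * r i) atTop atTop :=
    hr.const_mul_atTop (by linarith)
  have hT1 := MeasureTheory.intervalIntegral_tendsto_integral_Ioi 0 hIback hb_top
  have hT2 := MeasureTheory.intervalIntegral_tendsto_integral_Ioi 0 hIback hr
  have hT : Tendsto (fun i => (∫ s in (0:ℝ)..((1+ε)*(r i)), s^(k+2)*v s)
      - ∫ s in (0:ℝ)..(r i), s^(k+2)*v s) atTop (𝓝 0) := by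
    have := hT1.sub hT2
    simpa using this
  have hfin : ε * c₂ ≤ 0 := ge_of_tendsto hT hkey
  linarith [mul_pos hε hc₂, hfin]
end
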